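/- arXiv:1901.00293 — 7 statements merged into one kernel-verified Lean document; each statement's English description precedes it below -/
import Mathlib

section
/- Let A be a weakly cancellative commutative complex Banach algebra with dense principal ideals, let T = (T(t))_{t>0} be a strongly continuous semigroup of multipliers on A with ⋃_{t>0} T(t)(A) dense in A, and let λ ∈ ℝ satisfy limsup_{t→∞} (log ‖T(t)‖_op)/t < λ. Set L_T := { u ∈ A : sup_{s>0} e^{−λs} ‖T(s)u‖ < +∞ } and ‖u‖_λ := max( ‖u‖ , sup_{s>0} e^{−λs} ‖T(s)u‖ ) for u ∈ L_T. Then: (a) L_T = { u ∈ A : limsup_{t→0⁺} ‖T(t)u‖ < +∞ }; (b) L_T is an ideal of A and (L_T, ‖·‖_λ) is a Banach algebra, i.e. ‖·‖_λ is complete on L_T and ‖uv‖_λ ≤ ‖u‖_λ ‖v‖_λ for u, v ∈ L_T; (c) for every multiplier R on A one has R(L_T) ⊆ L_T and ‖Ru‖_λ ≤ ‖R‖_op ‖u‖_λ; (d) there exist constants k, K > 0 such that k‖u‖_λ ≤ max(‖u‖, sup_{0<t≤1} ‖T(t)u‖) ≤ K‖u‖_λ for all u ∈ L_T, so the topology of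 (L_T, ‖·‖_λ) does not depend on the choice of λ. (Proposition 3.2, parts concerning L_T) -/
open Filter Topology Set

/-- Proposition 3.2, parts concerning `L_T`. -/
theorem statement1
    {A : Type*} [NonUnitalNormedCommRing A] [NormedSpace ℂ A]
    [IsScalarTower ℂ A A] [SMulCommClass ℂ A A] [CompleteSpace A]
    (hwc : ∀ u : A, u ≠ 0 → ∃ v : A, u * v ≠ 0)
    (hdpi : ∃ u : A, DenseRange (fun v : A => u * v))
    (T : ℝ → A →L[ℂ] A)
    (hmul : ∀ t : ℝ, 0 < t → ∀ u v : A, T t (u * v) = T t u * v)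
    (hsg : ∀ s t : ℝ, 0 < s → 0 < t → T (s + t) = (T s).comp (T t))
    (hcont : ∀ u : A, ContinuousOn (fun t : ℝ => T t u) (Set.Ioi 0))
    (hdense : Dense (⋃ t ∈ Set.Ioi (0 : ℝ), Set.range (T t)))
    (lam : ℝ)
    (hlam : Filter.limsup (fun t : ℝ => ((Real.log ‖T t‖ / t : ℝ) : EReal)) Filter.atTop
      < (lam : EReal))
    (L : Set A)
    (hL : L = {u : A | ∃ C : ℝ, ∀ s : ℝ, 0 < s → Real.exp (-(lam * s)) * ‖T s u‖ ≤ C})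
    (N : A → ℝ)
    (hN : N = fun u : A =>
      max ‖u‖ (sSup {x : ℝ | ∃ s : ℝ, 0 < s ∧ x = Real.exp (-(lam * s)) * ‖T s u‖})) :
    -- (a) `L_T = { u : limsup_{t→0⁺} ‖T(t)u‖ < ∞ }`
    (∀ u : A, u ∈ L ↔ ∃ C : ℝ, ∀ᶠ t in 𝓝[>] (0 : ℝ), ‖T t u‖ ≤ C) ∧
    -- (b) `L_T` is an ideal of `A` ...
    (∀ u ∈ L, ∀ v : A, u * v ∈ L) ∧
    -- ... and `‖·‖_λ` is submultiplicative on `L_T` ...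
    (∀ u ∈ L, ∀ v ∈ L, N (u * v) ≤ N u * N v) ∧
    -- ... and `‖·‖_λ` is complete on `L_T`
    (∀ u : ℕ → A, (∀ n, u n ∈ L) →
      (∀ ε : ℝ, 0 < ε → ∃ n₀ : ℕ, ∀ m ≥ n₀, ∀ n ≥ n₀, N (u m - u n) < ε) →
      ∃ v ∈ L, Filter.Tendsto (fun n => N (u n - v)) Filter.atTop (𝓝 0)) ∧
    -- (c) multipliers preserve `L_T`
    (∀ R : A →L[ℂ] A, (∀ x y : A, R (x * y) = R x * y) →
      ∀ u ∈ L, R u ∈ L ∧ N (R u) ≤ ‖R‖ * N u) ∧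
    -- (d) the topology does not depend on the choice of `λ`
    (∃ k K : ℝ, 0 < k ∧ 0 < K ∧ ∀ u ∈ L,
      k * N u ≤ max ‖u‖ (sSup {x : ℝ | ∃ t : ℝ, 0 < t ∧ t ≤ 1 ∧ x = ‖T t u‖}) ∧
      max ‖u‖ (sSup {x : ℝ | ∃ t : ℝ, 0 < t ∧ t ≤ 1 ∧ x = ‖T t u‖}) ≤ K * N u) := by
  clear hdpi hdense
  -- basic reformulations
  have hLmem : ∀ w : A, w ∈ L ↔
      ∃ C : ℝ, ∀ s : ℝ, 0 < s → Real.exp (-(lam * s)) * ‖T s w‖ ≤ C := by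
    intro w; rw [hL]; exact Iff.rfl
  have hNw : ∀ w : A, N w =
      max ‖w‖ (sSup {x : ℝ | ∃ s : ℝ, 0 < s ∧ x = Real.exp (-(lam * s)) * ‖T s w‖}) := by
    intro w; rw [hN]
  -- semigroup applied to vectors
  have hTapp : ∀ s t : ℝ, 0 < s → 0 < t → ∀ x : A, T (s + t) x = T s (T t x) := by
    intro s t hs ht x; rw [hsg s t hs ht]; rfl
  -- nonemptiness / boundedness of the sup-sets
  have hSne : ∀ w : A,
      ({x : ℝ | ∃ s : ℝ, 0 < s ∧ x = Real.exp (-(lam * s)) * ‖T s w‖}).Nonempty := by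
    intro w; exact ⟨_, 1, one_pos, rfl⟩
  have hSbdd : ∀ w : A, w ∈ L →
      BddAbove {x : ℝ | ∃ s : ℝ, 0 < s ∧ x = Real.exp (-(lam * s)) * ‖T s w‖} := by
    intro w hw; obtain ⟨C, hC⟩ := (hLmem w).mp hw
    exact ⟨C, by rintro x ⟨s, hs, rfl⟩; exact hC s hs⟩
  have hNnorm : ∀ w : A, ‖w‖ ≤ N w := by intro w; rw [hNw]; exact le_max_left _ _
  have hNnn : ∀ w : A, 0 ≤ N w := fun w => le_trans (norm_nonneg w) (hNnorm w)
  have hEl : ∀ w : A, w ∈ L → ∀ s : ℝ, 0 < s →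
      Real.exp (-(lam * s)) * ‖T s w‖ ≤ N w := by
    intro w hw s hs
    rw [hNw]
    exact le_trans (le_csSup (hSbdd w hw) ⟨s, hs, rfl⟩) (le_max_right _ _)
  -- eventual exponential bound of the operator norms
  obtain ⟨t₀, ht₀1, ht₀⟩ : ∃ t₀ : ℝ, 1 ≤ t₀ ∧ ∀ t, t₀ ≤ t → ‖T t‖ ≤ Real.exp (lam * t) := by
    have h := eventually_lt_of_limsup_lt hlam
    rw [Filter.eventually_atTop] at h
    obtain ⟨a, ha⟩ := h
    refine ⟨max a 1, le_max_right _ _, fun t ht => ?_⟩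
    have hta : a ≤ t := le_trans (le_max_left _ _) ht
    have ht1 : (1:ℝ) ≤ t := le_trans (le_max_right _ _) ht
    have htpos : (0:ℝ) < t := lt_of_lt_of_le one_pos ht1
    have h2 : Real.log ‖T t‖ / t < lam := by
      have := ha t hta; rwa [EReal.coe_lt_coe_iff] at this
    have hlog : Real.log ‖T t‖ < lam * t := by
      have := (div_lt_iff₀ htpos).mp h2; linarith
    rcases eq_or_lt_of_le (norm_nonneg (T t)) with h0 | h0
    · rw [← h0]; positivity
    · calc ‖T t‖ = Real.exp (Real.log ‖T t‖) := (Real.exp_log h0).symm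
        _ ≤ Real.exp (lam * t) := Real.exp_le_exp.mpr hlog.le
  -- local boundedness of the operator norms (Banach–Steinhaus)
  obtain ⟨C₀, hC₀0, hC₀⟩ : ∃ C₀ : ℝ, 0 ≤ C₀ ∧
      ∀ t ∈ Set.Icc (1/2 : ℝ) (t₀ + 1/2), ‖T t‖ ≤ C₀ := by
    have hpt : ∀ x : A, ∃ C : ℝ,
        ∀ i : (Set.Icc (1/2 : ℝ) (t₀ + 1/2)), ‖T i x‖ ≤ C := by
      intro x
      have hsub : Set.Icc (1/2 : ℝ) (t₀ + 1/2) ⊆ Set.Ioi 0 := fun y hy => by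
        have := hy.1; simp only [Set.mem_Ioi]; linarith
      obtain ⟨C, hC⟩ := (isCompact_Icc (a := (1/2:ℝ)) (b := t₀ + 1/2)).exists_bound_of_continuousOn
        ((hcont x).mono hsub)
      exact ⟨C, fun i => hC i i.2⟩
    obtain ⟨C', hC'⟩ := banach_steinhaus (g := fun i : (Set.Icc (1/2 : ℝ) (t₀ + 1/2)) => T i) hpt
    refine ⟨max C' 0, le_max_right _ _, fun t ht => le_trans (hC' ⟨t, ht⟩) (le_max_left _ _)⟩
  -- master growth bound
  obtain ⟨C₁, hC₁1, hC₁⟩ : ∃ C₁ : ℝ, 1 ≤ C₁ ∧ ∀ (w : A) (B : ℝ), 0 ≤ B →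
      (∀ t, 0 < t → t ≤ 1 → ‖T t w‖ ≤ B) → ∀ s, 1 < s →
      ‖T s w‖ ≤ C₁ * Real.exp (lam * s) * B := by
    refine ⟨max (max 1 (Real.exp (-lam))) (C₀ * Real.exp (|lam| * (t₀ + 1))), le_trans
      (le_max_left 1 _) (le_max_left _ _), ?_⟩
    intro w B hB hBt s hs
    have hE : (0:ℝ) < Real.exp (lam * s) := Real.exp_pos _
    rcases le_or_gt s (t₀ + 1) with hcase | hcase
    · -- middle range
      have heq : T s w = T (s - 1/2) (T (1/2) w) := by
        have := hTapp (s - 1/2) (1/2) (by linarith) (by norm_num) w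
        rwa [show s - 1/2 + 1/2 = s by ring] at this
      have h1 : ‖T s w‖ ≤ C₀ * B := by
        rw [heq]
        calc ‖T (s - 1/2) (T (1/2) w)‖ ≤ ‖T (s - 1/2)‖ * ‖T (1/2) w‖ :=
              (T (s - 1/2)).le_opNorm _
          _ ≤ C₀ * B := mul_le_mul (hC₀ _ ⟨by linarith, by linarith⟩)
              (hBt (1/2) (by norm_num) (by norm_num)) (norm_nonneg _) hC₀0
      have h2 : (1:ℝ) ≤ Real.exp (|lam| * (t₀ + 1)) * Real.exp (lam * s) := by
        rw [← Real.exp_add]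
        apply Real.one_le_exp
        have ha1 : -|lam| ≤ lam := neg_abs_le lam
        have ha2 : (0:ℝ) ≤ |lam| := abs_nonneg lam
        nlinarith
      have h3 : C₀ * B ≤ C₀ * Real.exp (|lam| * (t₀ + 1)) * Real.exp (lam * s) * B := by
        have := mul_le_mul_of_nonneg_left h2 (mul_nonneg hC₀0 hB)
        nlinarith [this]
      refine le_trans h1 (le_trans h3 ?_)
      have h4 : C₀ * Real.exp (|lam| * (t₀ + 1)) ≤
          max (max 1 (Real.exp (-lam))) (C₀ * Real.exp (|lam| * (t₀ + 1))) := le_max_right _ _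
      exact mul_le_mul_of_nonneg_right (mul_le_mul_of_nonneg_right h4 hE.le) hB
    · -- far range
      have heq : T s w = T (s - 1) (T 1 w) := by
        have := hTapp (s - 1) 1 (by linarith) one_pos w
        rwa [show s - 1 + 1 = s by ring] at this
      have h1 : ‖T s w‖ ≤ Real.exp (lam * (s - 1)) * B := by
        rw [heq]
        calc ‖T (s - 1) (T 1 w)‖ ≤ ‖T (s - 1)‖ * ‖T 1 w‖ := (T (s - 1)).le_opNorm _
          _ ≤ Real.exp (lam * (s - 1)) * B := mul_le_mul (ht₀ _ (by linarith))
              (hBt 1 one_pos le_rfl) (norm_nonneg _) (Real.exp_pos _).le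
      have h2 : Real.exp (lam * (s - 1)) = Real.exp (-lam) * Real.exp (lam * s) := by
        rw [← Real.exp_add]; ring_nf
      refine le_trans h1 ?_
      rw [h2]
      have h3 : Real.exp (-lam) ≤
          max (max 1 (Real.exp (-lam))) (C₀ * Real.exp (|lam| * (t₀ + 1))) :=
        le_trans (le_max_right 1 _) (le_max_left _ _)
      exact mul_le_mul_of_nonneg_right (mul_le_mul_of_nonneg_right h3 hE.le) hB
  -- membership in L from boundedness near 0
  have hL_of_small : ∀ (w : A) (B : ℝ), (∀ t, 0 < t → t ≤ 1 → ‖T t w‖ ≤ B) → w ∈ L := by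
    intro w B hBt
    have hB0 : 0 ≤ B := le_trans (norm_nonneg (T 1 w)) (hBt 1 one_pos le_rfl)
    rw [hLmem]
    refine ⟨max (Real.exp |lam| * B) (C₁ * B), fun s hs => ?_⟩
    rcases le_or_gt s 1 with hs1 | hs1
    · have he : Real.exp (-(lam * s)) ≤ Real.exp |lam| := by
        apply Real.exp_le_exp.mpr
        have h1 : -(lam * s) ≤ |lam * s| := neg_le_abs _
        have h2 : |lam * s| = |lam| * s := by rw [abs_mul, abs_of_pos hs]
        nlinarith [abs_nonneg lam]
      refine le_trans ?_ (le_max_left _ _)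
      exact mul_le_mul he (hBt s hs hs1) (norm_nonneg _) (Real.exp_pos _).le
    · refine le_trans ?_ (le_max_right _ _)
      have h1 : ‖T s w‖ ≤ C₁ * Real.exp (lam * s) * B := hC₁ w B hB0 hBt s hs1
      calc Real.exp (-(lam * s)) * ‖T s w‖
          ≤ Real.exp (-(lam * s)) * (C₁ * Real.exp (lam * s) * B) :=
            mul_le_mul_of_nonneg_left h1 (Real.exp_pos _).le
        _ = (Real.exp (-(lam * s)) * Real.exp (lam * s)) * (C₁ * B) := by ring
        _ = C₁ * B := by rw [← Real.exp_add, neg_add_cancel, Real.exp_zero, one_mul]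
  -- boundedness near 0 from membership in L
  have hsmall_of_L : ∀ w : A, w ∈ L → ∀ t, 0 < t → t ≤ 1 →
      ‖T t w‖ ≤ Real.exp |lam| * N w := by
    intro w hw t ht ht1
    have he : Real.exp (lam * t) ≤ Real.exp |lam| := by
      apply Real.exp_le_exp.mpr
      have h1 : lam * t ≤ |lam| * t :=
        mul_le_mul_of_nonneg_right (le_abs_self lam) ht.le
      nlinarith [abs_nonneg lam]
    calc ‖T t w‖ = Real.exp (lam * t) * (Real.exp (-(lam * t)) * ‖T t w‖) := by
          rw [← mul_assoc, ← Real.exp_add, add_neg_cancel, Real.exp_zero, one_mul]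
      _ ≤ Real.exp |lam| * N w :=
          mul_le_mul he (hEl w hw t ht) (by positivity) (Real.exp_pos _).le
  -- L is closed under subtraction
  have hLsub : ∀ a ∈ L, ∀ b ∈ L, a - b ∈ L := by
    intro a ha b hb
    obtain ⟨Ca, hCa⟩ := (hLmem a).mp ha
    obtain ⟨Cb, hCb⟩ := (hLmem b).mp hb
    rw [hLmem]
    refine ⟨Ca + Cb, fun s hs => ?_⟩
    have h1 : ‖T s (a - b)‖ ≤ ‖T s a‖ + ‖T s b‖ := by
      rw [map_sub]; exact norm_sub_le _ _
    calc Real.exp (-(lam * s)) * ‖T s (a - b)‖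
        ≤ Real.exp (-(lam * s)) * (‖T s a‖ + ‖T s b‖) :=
          mul_le_mul_of_nonneg_left h1 (Real.exp_pos _).le
      _ = Real.exp (-(lam * s)) * ‖T s a‖ + Real.exp (-(lam * s)) * ‖T s b‖ := by ring
      _ ≤ Ca + Cb := add_le_add (hCa s hs) (hCb s hs)
  refine ⟨?_, ?_, ?_, ?_, ?_, ?_⟩
  · -- (a)
    intro u
    constructor
    · intro hu
      refine ⟨Real.exp |lam| * N u, ?_⟩
      filter_upwards [Ioo_mem_nhdsGT_of_mem (show (0:ℝ) ∈ Set.Ico (0:ℝ) 1 by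
        constructor <;> norm_num)] with t ht
      exact hsmall_of_L u hu t ht.1 ht.2.le
    · rintro ⟨C, hev⟩
      rw [Filter.eventually_iff, mem_nhdsGT_iff_exists_Ioo_subset] at hev
      obtain ⟨δ, hδ, hsub⟩ := hev
      rw [Set.mem_Ioi] at hδ
      set δ' : ℝ := min (δ/2) 1 with hδ'def
      have hδ'pos : 0 < δ' := lt_min (by linarith) one_pos
      have hδ'1 : δ' ≤ 1 := min_le_right _ _
      obtain ⟨C₂, hC₂⟩ := (isCompact_Icc (a := δ') (b := 1)).exists_bound_of_continuousOn
        ((hcont u).mono (fun x hx => lt_of_lt_of_le hδ'pos hx.1))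
      refine hL_of_small u (max C C₂) (fun t ht ht1 => ?_)
      rcases lt_or_ge t δ' with h | h
      · refine le_trans ?_ (le_max_left _ _)
        have : t ∈ Set.Ioo (0:ℝ) δ := ⟨ht, by
          have := min_le_left (δ/2) 1
          have : δ' ≤ δ/2 := min_le_left _ _
          linarith⟩
        exact hsub this
      · exact le_trans (hC₂ t ⟨h, ht1⟩) (le_max_right _ _)
  · -- (b) ideal
    intro u hu v
    obtain ⟨C, hC⟩ := (hLmem u).mp hu
    rw [hLmem]
    refine ⟨C * ‖v‖, fun s hs => ?_⟩
    calc Real.exp (-(lam * s)) * ‖T s (u * v)‖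
        = Real.exp (-(lam * s)) * ‖T s u * v‖ := by rw [hmul s hs]
      _ ≤ Real.exp (-(lam * s)) * (‖T s u‖ * ‖v‖) :=
          mul_le_mul_of_nonneg_left (norm_mul_le _ _) (Real.exp_pos _).le
      _ = (Real.exp (-(lam * s)) * ‖T s u‖) * ‖v‖ := by ring
      _ ≤ C * ‖v‖ := mul_le_mul_of_nonneg_right (hC s hs) (norm_nonneg v)
  · -- (b) submultiplicative
    intro u hu v hv
    rw [hNw (u * v)]
    apply max_le
    · exact le_trans (norm_mul_le _ _)
        (mul_le_mul (hNnorm u) (hNnorm v) (norm_nonneg v) (hNnn u))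
    · apply csSup_le (hSne (u * v))
      rintro x ⟨s, hs, rfl⟩
      calc Real.exp (-(lam * s)) * ‖T s (u * v)‖
          = Real.exp (-(lam * s)) * ‖T s u * v‖ := by rw [hmul s hs]
        _ ≤ Real.exp (-(lam * s)) * (‖T s u‖ * ‖v‖) :=
            mul_le_mul_of_nonneg_left (norm_mul_le _ _) (Real.exp_pos _).le
        _ = (Real.exp (-(lam * s)) * ‖T s u‖) * ‖v‖ := by ring
        _ ≤ N u * N v := mul_le_mul (hEl u hu s hs) (hNnorm v) (norm_nonneg v) (hNnn u)
  · -- (b) completeness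
    intro u hu hc
    have hcauchy : CauchySeq u := by
      rw [Metric.cauchySeq_iff]
      intro ε hε
      obtain ⟨n₀, h⟩ := hc ε hε
      refine ⟨n₀, fun m hm n hn => ?_⟩
      rw [dist_eq_norm]
      exact lt_of_le_of_lt (hNnorm (u m - u n)) (h m hm n hn)
    obtain ⟨v, hv⟩ := cauchySeq_tendsto_of_complete hcauchy
    have hkey2 : ∀ ε : ℝ, 0 < ε → ∃ n₀ : ℕ, ∀ m ≥ n₀, ∀ s : ℝ, 0 < s →
        Real.exp (-(lam * s)) * ‖T s (u m - v)‖ ≤ ε := by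
      intro ε hε
      obtain ⟨n₀, h⟩ := hc ε hε
      refine ⟨n₀, fun m hm s hs => ?_⟩
      have h1 : Tendsto (fun n => u m - u n) atTop (𝓝 (u m - v)) :=
        tendsto_const_nhds.sub hv
      have h2 : Tendsto (fun n => Real.exp (-(lam * s)) * ‖T s (u m - u n)‖) atTop
          (𝓝 (Real.exp (-(lam * s)) * ‖T s (u m - v)‖)) :=
        (((((T s).continuous.tendsto _).comp h1).norm).const_mul _)
      refine le_of_tendsto h2 ?_
      filter_upwards [eventually_ge_atTop n₀] with n hn
      exact le_of_lt (lt_of_le_of_lt (hEl _ (hLsub (u m) (hu m) (u n) (hu n)) s hs)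
        (h m hm n hn))
    have hvL : v ∈ L := by
      obtain ⟨n₀, h⟩ := hkey2 1 one_pos
      have h1 : u n₀ - v ∈ L := (hLmem _).mpr ⟨1, h n₀ le_rfl⟩
      have h2 := hLsub (u n₀) (hu n₀) (u n₀ - v) h1
      rwa [sub_sub_cancel] at h2
    refine ⟨v, hvL, ?_⟩
    rw [Metric.tendsto_atTop]
    intro ε hε
    obtain ⟨n₀, h⟩ := hkey2 (ε/2) (by linarith)
    have hnorm : Tendsto (fun n => ‖u n - v‖) atTop (𝓝 0) := by
      have := (hv.sub (tendsto_const_nhds (x := v))).norm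
      rwa [sub_self, norm_zero] at this
    rw [Metric.tendsto_atTop] at hnorm
    obtain ⟨n₁, h1⟩ := hnorm (ε/2) (by linarith)
    refine ⟨max n₀ n₁, fun n hn => ?_⟩
    have hn₀ : n₀ ≤ n := le_trans (le_max_left _ _) hn
    have hn₁ : n₁ ≤ n := le_trans (le_max_right _ _) hn
    have h2 : ‖u n - v‖ < ε/2 := by
      have := h1 n hn₁
      rwa [Real.dist_eq, sub_zero, abs_of_nonneg (norm_nonneg _)] at this
    have h3 : N (u n - v) ≤ ε/2 := by
      rw [hNw]
      apply max_le h2.le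
      apply csSup_le (hSne _)
      rintro x ⟨s, hs, rfl⟩
      exact h n hn₀ s hs
    rw [Real.dist_eq, sub_zero, abs_of_nonneg (hNnn _)]
    linarith
  · -- (c) multipliers
    intro R hR u hu
    have hRT : ∀ s : ℝ, 0 < s → ∀ x : A, T s (R x) = R (T s x) := by
      intro s hs x
      have hzero : ∀ y : A, (T s (R x) - R (T s x)) * y = 0 := by
        intro y
        have e1 : T s (R x) * y = T s x * R y := by
          rw [← hmul s hs (R x) y, ← hR x y, mul_comm x y, hR y x, mul_comm (R y) x,
            hmul s hs]
        have e2 : R (T s x) * y = T s x * R y := by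
          rw [← hR (T s x) y, mul_comm (T s x) y, hR y (T s x), mul_comm]
        rw [sub_mul, e1, e2, sub_self]
      by_contra hne
      obtain ⟨y, hy⟩ := hwc _ (sub_ne_zero.mpr hne)
      exact hy (hzero y)
    constructor
    · obtain ⟨C, hC⟩ := (hLmem u).mp hu
      rw [hLmem]
      refine ⟨‖R‖ * C, fun s hs => ?_⟩
      calc Real.exp (-(lam * s)) * ‖T s (R u)‖
          = Real.exp (-(lam * s)) * ‖R (T s u)‖ := by rw [hRT s hs u]
        _ ≤ Real.exp (-(lam * s)) * (‖R‖ * ‖T s u‖) :=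
            mul_le_mul_of_nonneg_left (R.le_opNorm _) (Real.exp_pos _).le
        _ = ‖R‖ * (Real.exp (-(lam * s)) * ‖T s u‖) := by ring
        _ ≤ ‖R‖ * C := mul_le_mul_of_nonneg_left (hC s hs) (norm_nonneg R)
    · rw [hNw]
      apply max_le
      · exact le_trans (R.le_opNorm u) (mul_le_mul_of_nonneg_left (hNnorm u) (norm_nonneg R))
      · apply csSup_le (hSne _)
        rintro x ⟨s, hs, rfl⟩
        calc Real.exp (-(lam * s)) * ‖T s (R u)‖
            = Real.exp (-(lam * s)) * ‖R (T s u)‖ := by rw [hRT s hs u]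
          _ ≤ Real.exp (-(lam * s)) * (‖R‖ * ‖T s u‖) :=
              mul_le_mul_of_nonneg_left (R.le_opNorm _) (Real.exp_pos _).le
          _ = ‖R‖ * (Real.exp (-(lam * s)) * ‖T s u‖) := by ring
          _ ≤ ‖R‖ * N u := mul_le_mul_of_nonneg_left (hEl u hu s hs) (norm_nonneg R)
  · -- (d)
    set c : ℝ := max (Real.exp |lam|) C₁ with hcdef
    have hc1 : (1:ℝ) ≤ c := le_trans hC₁1 (le_max_right _ _)
    have hcpos : (0:ℝ) < c := lt_of_lt_of_le one_pos hc1
    have hK1 : (1:ℝ) ≤ Real.exp |lam| := Real.one_le_exp (abs_nonneg lam)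
    refine ⟨c⁻¹, Real.exp |lam|, inv_pos.mpr hcpos, Real.exp_pos _, fun u hu => ?_⟩
    set Q : Set ℝ := {x : ℝ | ∃ t : ℝ, 0 < t ∧ t ≤ 1 ∧ x = ‖T t u‖} with hQdef
    have hQne : Q.Nonempty := ⟨_, 1, one_pos, le_rfl, rfl⟩
    have hQbdd : BddAbove Q := by
      refine ⟨Real.exp |lam| * N u, ?_⟩
      rintro x ⟨t, ht, ht1, rfl⟩
      exact hsmall_of_L u hu t ht ht1
    have hQel : ∀ t : ℝ, 0 < t → t ≤ 1 → ‖T t u‖ ≤ sSup Q :=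
      fun t h1 h2 => le_csSup hQbdd ⟨t, h1, h2, rfl⟩
    have hQnn : 0 ≤ sSup Q := le_trans (norm_nonneg (T 1 u)) (hQel 1 one_pos le_rfl)
    set M : ℝ := max ‖u‖ (sSup Q) with hMdef
    have hMnn : 0 ≤ M := le_trans (norm_nonneg u) (le_max_left _ _)
    have hQM : sSup Q ≤ M := le_max_right _ _
    constructor
    · -- lower bound : c⁻¹ * N u ≤ M
      rw [inv_mul_le_iff₀ hcpos]
      rw [hNw]
      apply max_le
      · exact le_trans (le_max_left _ _) (le_mul_of_one_le_left hMnn hc1)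
      · apply csSup_le (hSne u)
        rintro x ⟨s, hs, rfl⟩
        rcases le_or_gt s 1 with hs1 | hs1
        · have he : Real.exp (-(lam * s)) ≤ Real.exp |lam| := by
            apply Real.exp_le_exp.mpr
            have h1 : -(lam * s) ≤ |lam * s| := neg_le_abs _
            have h2 : |lam * s| = |lam| * s := by rw [abs_mul, abs_of_pos hs]
            nlinarith [abs_nonneg lam]
          have h3 : Real.exp (-(lam * s)) * ‖T s u‖ ≤ Real.exp |lam| * M :=
            mul_le_mul he (le_trans (hQel s hs hs1) hQM) (norm_nonneg _) (Real.exp_pos _).le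
          refine le_trans h3 ?_
          exact mul_le_mul_of_nonneg_right (le_max_left _ _) hMnn
        · have h1 : ‖T s u‖ ≤ C₁ * Real.exp (lam * s) * sSup Q :=
            hC₁ u (sSup Q) hQnn hQel s hs1
          have h2 : Real.exp (-(lam * s)) * ‖T s u‖ ≤ C₁ * sSup Q := by
            calc Real.exp (-(lam * s)) * ‖T s u‖
                ≤ Real.exp (-(lam * s)) * (C₁ * Real.exp (lam * s) * sSup Q) :=
                  mul_le_mul_of_nonneg_left h1 (Real.exp_pos _).le
              _ = (Real.exp (-(lam * s)) * Real.exp (lam * s)) * (C₁ * sSup Q) := by ring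
              _ = C₁ * sSup Q := by
                  rw [← Real.exp_add, neg_add_cancel, Real.exp_zero, one_mul]
          refine le_trans h2 ?_
          calc C₁ * sSup Q ≤ c * sSup Q :=
              mul_le_mul_of_nonneg_right (le_max_right _ _) hQnn
            _ ≤ c * M := mul_le_mul_of_nonneg_left hQM hcpos.le
    · -- upper bound : M ≤ exp|lam| * N u
      apply max_le
      · exact le_trans (hNnorm u) (le_mul_of_one_le_left (hNnn u) hK1)
      · apply csSup_le hQne
        rintro x ⟨t, ht, ht1, rfl⟩
        exact hsmall_of_L u hu t ht ht1
end

section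
/- Let a < b ≤ a + π, let 𝔅 be a complex Banach algebra, let T : S_{a,b} → 𝔅 be a holomorphic semigroup, let a < α ≤ β < b, and let u ∈ 𝔅 satisfy limsup_{ζ→0, ζ∈S̄_{α,β}∖{0}} ‖T(ζ)u‖ < +∞. Set L := limsup_{r→∞} (log max(‖T(re^{iα})‖, ‖T(re^{iβ})‖))/r and assume L < +∞. If λ ∈ ℝ satisfies λ > L / cos((β−α)/2), then sup_{ζ ∈ S̄_{α,β}∖{0}} ‖ e^{−λ ζ e^{−i(α+β)/2}} T(ζ)u ‖ < +∞. (Lemma 4.1(i)) -/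
open Filter Topology Set

noncomputable section

/-- The closed sector `S̄_{a,b} = { r e^{iθ} : r ≥ 0, a ≤ θ ≤ b }` (a closed ray when `a = b`). -/
def closedSector (a b : ℝ) : Set ℂ :=
  {z : ℂ | ∃ r : ℝ, 0 ≤ r ∧ ∃ θ ∈ Set.Icc a b, z = (r : ℂ) * Complex.exp ((θ : ℂ) * Complex.I)}

/-- The open sector `S_{a,b} = { r e^{iθ} : r > 0, a < θ < b }`. -/
def openSector (a b : ℝ) : Set ℂ :=
  {z : ℂ | ∃ r : ℝ, 0 < r ∧ ∃ θ ∈ Set.Ioo a b, z = (r : ℂ) * Complex.exp ((θ : ℂ) * Complex.I)}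

namespace S2Aux

open Complex

lemma norm_ray (ρ θ : ℝ) (hρ : 0 ≤ ρ) : ‖(ρ:ℂ) * Complex.exp ((θ:ℂ) * I)‖ = ρ := by
  simp [Complex.norm_exp, _root_.abs_of_nonneg hρ]

lemma ray_ne_zero {ρ θ : ℝ} (hρ : 0 < ρ) : (ρ:ℂ) * Complex.exp ((θ:ℂ) * I) ≠ 0 := by
  intro h
  have := norm_ray ρ θ hρ.le
  rw [h] at this
  simp at this
  exact hρ.ne' this.symm

lemma mem_open {a b ρ θ : ℝ} (hρ : 0 < ρ) (hθ : θ ∈ Set.Ioo a b) :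
    (ρ:ℂ) * Complex.exp ((θ:ℂ) * I) ∈ openSector a b := ⟨ρ, hρ, θ, hθ, rfl⟩

lemma mem_closed {α β ρ θ : ℝ} (hρ : 0 ≤ ρ) (hθ : θ ∈ Set.Icc α β) :
    (ρ:ℂ) * Complex.exp ((θ:ℂ) * I) ∈ closedSector α β := ⟨ρ, hρ, θ, hθ, rfl⟩

lemma mem_closed_diff {α β ρ θ : ℝ} (hρ : 0 < ρ) (hθ : θ ∈ Set.Icc α β) :
    (ρ:ℂ) * Complex.exp ((θ:ℂ) * I) ∈ closedSector α β \ {0} :=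
  ⟨mem_closed hρ.le hθ, ray_ne_zero hρ⟩

lemma exists_ray {α β : ℝ} {ζ : ℂ} (h : ζ ∈ closedSector α β \ {0}) :
    ∃ ρ : ℝ, 0 < ρ ∧ ∃ θ ∈ Set.Icc α β, ζ = (ρ:ℂ) * Complex.exp ((θ:ℂ) * I) := by
  obtain ⟨⟨r, hr, θ, hθ, rfl⟩, hne⟩ := h
  refine ⟨r, ?_, θ, hθ, rfl⟩
  rcases hr.lt_or_eq with h | h
  · exact h
  · exfalso; apply hne; simp [← h]

lemma norm_exp_factor (lam γ ρ θ : ℝ) :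
    ‖Complex.exp (-(lam:ℂ) * ((ρ:ℂ)*Complex.exp ((θ:ℂ)*I)) * Complex.exp (-(γ:ℂ)*I))‖
      = Real.exp (-(lam * (ρ * Real.cos (θ - γ)))) := by
  have h2 : Complex.exp ((θ:ℂ)*I) * Complex.exp (-(γ:ℂ)*I)
      = Complex.exp ((((θ - γ):ℝ):ℂ)*I) := by
    rw [← Complex.exp_add]; push_cast; ring_nf
  have h1 : -(lam:ℂ) * ((ρ:ℂ)*Complex.exp ((θ:ℂ)*I)) * Complex.exp (-(γ:ℂ)*I)
      = ((-(lam*ρ) : ℝ) : ℂ) * Complex.exp ((((θ - γ):ℝ):ℂ)*I) := by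
    rw [← h2]; push_cast; ring
  rw [h1, Complex.norm_exp, Complex.re_ofReal_mul,
    Complex.exp_ofReal_mul_I_re]
  ring_nf

lemma exp_log_ray {ρ : ℝ} (hρ : 0 < ρ) (θ : ℝ) :
    Complex.exp (((Real.log ρ : ℝ):ℂ) + (θ:ℂ)*I) = (ρ:ℂ) * Complex.exp ((θ:ℂ)*I) := by
  rw [Complex.exp_add, ← Complex.ofReal_exp, Real.exp_log hρ]

lemma exp_eq_ray (w : ℂ) :
    Complex.exp w = ((Real.exp w.re : ℝ):ℂ) * Complex.exp ((w.im:ℂ)*I) := by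
  rw [Complex.ofReal_exp, ← Complex.exp_add]
  congr 1
  exact (Complex.re_add_im w).symm

lemma eventually_unpack {p : ℂ → Prop} {s : Set ℂ} (h : ∀ᶠ ζ in 𝓝[s] (0:ℂ), p ζ) :
    ∃ ε > 0, ∀ ζ ∈ s, ‖ζ‖ < ε → p ζ := by
  rw [Filter.Eventually, Metric.mem_nhdsWithin_iff] at h
  obtain ⟨ε, hε, h⟩ := h
  refine ⟨ε, hε, fun ζ hζ hd => h ⟨Metric.mem_ball.2 ?_, hζ⟩⟩
  rwa [dist_zero_right]

lemma T_split {B : Type*} [NonUnitalNormedRing B] {a b : ℝ} {T : ℂ → B}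
    (hsg : ∀ ζ ∈ openSector a b, ∀ ζ' ∈ openSector a b, T (ζ + ζ') = T ζ * T ζ')
    {θ s t : ℝ} (hθ : θ ∈ Set.Ioo a b) (hs : 0 < s) (ht : 0 < t) :
    T (((s + t : ℝ):ℂ) * Complex.exp ((θ:ℂ)*I))
      = T ((s:ℂ) * Complex.exp ((θ:ℂ)*I)) * T ((t:ℂ) * Complex.exp ((θ:ℂ)*I)) := by
  have h : ((s + t : ℝ):ℂ) * Complex.exp ((θ:ℂ)*I)
      = (s:ℂ) * Complex.exp ((θ:ℂ)*I) + (t:ℂ) * Complex.exp ((θ:ℂ)*I) := by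
    push_cast; ring
  rw [h, hsg _ (mem_open hs hθ) _ (mem_open ht hθ)]

lemma T_pow {B : Type*} [NonUnitalNormedRing B] {a b : ℝ} {T : ℂ → B}
    (hsg : ∀ ζ ∈ openSector a b, ∀ ζ' ∈ openSector a b, T (ζ + ζ') = T ζ * T ζ')
    {θ ρ : ℝ} (hθ : θ ∈ Set.Ioo a b) (hρ : 0 < ρ) :
    ∀ n : ℕ, ‖T (((((n : ℝ) + 1) * ρ : ℝ):ℂ) * Complex.exp ((θ:ℂ)*I))‖
      ≤ ‖T ((ρ:ℂ) * Complex.exp ((θ:ℂ)*I))‖ ^ (n + 1) := by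
  intro n
  induction n with
  | zero => simp
  | succ n ih =>
      have hcast : ((((n+1:ℕ):ℝ) + 1) * ρ : ℝ) = ((((n:ℝ) + 1) * ρ) + ρ : ℝ) := by
        push_cast; ring
      have hpos : 0 < ((n:ℝ) + 1) * ρ := by positivity
      rw [hcast, S2Aux.T_split hsg hθ hpos hρ]
      calc ‖T (((((n:ℝ) + 1) * ρ : ℝ):ℂ) * Complex.exp ((θ:ℂ)*I))
              * T ((ρ:ℂ) * Complex.exp ((θ:ℂ)*I))‖
          ≤ ‖T (((((n:ℝ) + 1) * ρ : ℝ):ℂ) * Complex.exp ((θ:ℂ)*I))‖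
              * ‖T ((ρ:ℂ) * Complex.exp ((θ:ℂ)*I))‖ := norm_mul_le _ _
        _ ≤ ‖T ((ρ:ℂ) * Complex.exp ((θ:ℂ)*I))‖ ^ (n + 1)
              * ‖T ((ρ:ℂ) * Complex.exp ((θ:ℂ)*I))‖ :=
            mul_le_mul_of_nonneg_right ih (norm_nonneg _)
        _ = ‖T ((ρ:ℂ) * Complex.exp ((θ:ℂ)*I))‖ ^ (n + 1 + 1) := by ring

lemma compact_bound {E : Type*} [SeminormedAddCommGroup E] {g : ℂ → E} {s : Set ℂ}
    (hg : ContinuousOn g s) (d R α β : ℝ)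
    (hsub : ∀ ρ ∈ Set.Icc d R, ∀ θ ∈ Set.Icc α β, (ρ:ℂ) * Complex.exp ((θ:ℂ)*I) ∈ s) :
    ∃ C, ∀ ρ ∈ Set.Icc d R, ∀ θ ∈ Set.Icc α β,
      ‖g ((ρ:ℂ) * Complex.exp ((θ:ℂ)*I))‖ ≤ C := by
  set φ : ℝ × ℝ → ℂ := fun p => (p.1:ℂ) * Complex.exp ((p.2:ℂ)*I) with hφdef
  have hφ : Continuous φ := by
    apply Continuous.mul
    · exact Complex.continuous_ofReal.comp continuous_fst
    · exact Complex.continuous_exp.comp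
        ((Complex.continuous_ofReal.comp continuous_snd).mul continuous_const)
  have hK : IsCompact (φ '' (Set.Icc d R ×ˢ Set.Icc α β)) :=
    (isCompact_Icc.prod isCompact_Icc).image hφ
  have hKs : φ '' (Set.Icc d R ×ˢ Set.Icc α β) ⊆ s := by
    rintro _ ⟨⟨ρ, θ⟩, ⟨h1, h2⟩, rfl⟩
    exact hsub ρ h1 θ h2
  obtain ⟨C, hC⟩ := hK.exists_bound_of_continuousOn (hg.mono hKs)
  exact ⟨C, fun ρ h1 θ h2 => hC _ ⟨(ρ, θ), ⟨h1, h2⟩, rfl⟩⟩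

end S2Aux

set_option maxHeartbeats 2000000 in
/-- Lemma 4.1(i). -/
theorem statement2
    {B : Type*} [NonUnitalNormedRing B] [NormedSpace ℂ B]
    [IsScalarTower ℂ B B] [SMulCommClass ℂ B B] [CompleteSpace B]
    (a b : ℝ) (hab : a < b) (hba : b ≤ a + Real.pi)
    (T : ℂ → B)
    (hT : DifferentiableOn ℂ T (openSector a b))
    (hsg : ∀ ζ ∈ openSector a b, ∀ ζ' ∈ openSector a b, T (ζ + ζ') = T ζ * T ζ')
    (α β : ℝ) (hαa : a < α) (hαβ : α ≤ β) (hβb : β < b)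
    (u : B)
    (hu : ∃ C : ℝ, ∀ᶠ ζ in 𝓝[closedSector α β \ {0}] (0 : ℂ), ‖T ζ * u‖ ≤ C)
    (L : EReal)
    (hLdef : L = Filter.limsup
      (fun r : ℝ =>
        ((Real.log (max ‖T ((r : ℂ) * Complex.exp ((α : ℂ) * Complex.I))‖
            ‖T ((r : ℂ) * Complex.exp ((β : ℂ) * Complex.I))‖) / r : ℝ) : EReal))
      Filter.atTop)
    (hLtop : L < ⊤)
    (lam : ℝ)
    (hlam : L < ((lam * Real.cos ((β - α) / 2) : ℝ) : EReal)) :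
    ∃ C : ℝ, ∀ ζ ∈ closedSector α β \ {0},
      ‖Complex.exp (-(lam : ℂ) * ζ * Complex.exp (-(((α + β) / 2 : ℝ) : ℂ) * Complex.I)) •
        (T ζ * u)‖ ≤ C := by
  classical
  obtain ⟨C₀', hu0⟩ := hu
  obtain ⟨δ, hδ0, hδ⟩ := S2Aux.eventually_unpack hu0
  set γ : ℝ := (α + β) / 2 with hγdef
  set ψ : ℝ := (β - α) / 2 with hψdef
  set M : ℝ := lam * Real.cos ψ with hMdef
  set f : ℂ → B := fun ζ =>
    Complex.exp (-(lam : ℂ) * ζ * Complex.exp (-(γ : ℂ) * Complex.I)) • (T ζ * u) with hfdef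
  -- basic angle facts
  have hβα : β - α < Real.pi := by linarith
  have hψ0 : 0 ≤ ψ := by rw [hψdef]; linarith
  have hψπ : ψ < Real.pi / 2 := by rw [hψdef]; linarith
  have hIoo : ∀ θ ∈ Set.Icc α β, θ ∈ Set.Ioo a b :=
    fun θ hθ => ⟨lt_of_lt_of_le hαa hθ.1, lt_of_le_of_lt hθ.2 hβb⟩
  -- bound near zero
  set C₀ : ℝ := max C₀' 0 with hC₀def
  have hC₀0 : 0 ≤ C₀ := le_max_right _ _
  have hC₀ : ∀ θ ∈ Set.Icc α β, ∀ ρ : ℝ, 0 < ρ → ρ < δ →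
      ‖T ((ρ:ℂ) * Complex.exp ((θ:ℂ) * Complex.I)) * u‖ ≤ C₀ := by
    intro θ hθ ρ hρ hρδ
    refine le_trans (hδ _ (S2Aux.mem_closed_diff hρ hθ) ?_) (le_max_left _ _)
    rwa [S2Aux.norm_ray ρ θ hρ.le]
  -- eventual exponential bound on the two boundary rays
  have hev : ∀ᶠ r : ℝ in Filter.atTop,
      ((Real.log (max ‖T ((r : ℂ) * Complex.exp ((α : ℂ) * Complex.I))‖
        ‖T ((r : ℂ) * Complex.exp ((β : ℂ) * Complex.I))‖) / r : ℝ) : EReal)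
        < ((M : ℝ) : EReal) := by
    rw [hLdef] at hlam
    exact Filter.eventually_lt_of_limsup_lt hlam
  obtain ⟨R₀', hR₀'⟩ := Filter.eventually_atTop.1 hev
  set R₀ : ℝ := max R₀' 1 with hR₀def
  have hR₀1 : (1:ℝ) ≤ R₀ := le_max_right _ _
  have hRbound : ∀ r : ℝ, R₀ ≤ r → ∀ θ₀ : ℝ, θ₀ = α ∨ θ₀ = β →
      ‖T ((r:ℂ) * Complex.exp ((θ₀:ℂ) * Complex.I))‖ ≤ Real.exp (M * r) := by
    intro r hr θ₀ hor
    have hr0 : (0:ℝ) < r := lt_of_lt_of_le one_pos (le_trans hR₀1 hr)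
    have h1 := hR₀' r (le_trans (le_max_left _ _) hr)
    rw [EReal.coe_lt_coe_iff] at h1
    have h2 : Real.log (max ‖T ((r : ℂ) * Complex.exp ((α : ℂ) * Complex.I))‖
        ‖T ((r : ℂ) * Complex.exp ((β : ℂ) * Complex.I))‖) < M * r := by
      have := (div_lt_iff₀ hr0).1 h1
      linarith [this]
    have h3 : max ‖T ((r : ℂ) * Complex.exp ((α : ℂ) * Complex.I))‖
        ‖T ((r : ℂ) * Complex.exp ((β : ℂ) * Complex.I))‖ ≤ Real.exp (M * r) := by
      rcases le_or_gt (max ‖T ((r : ℂ) * Complex.exp ((α : ℂ) * Complex.I))‖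
        ‖T ((r : ℂ) * Complex.exp ((β : ℂ) * Complex.I))‖) 0 with h | h
      · exact le_trans h (Real.exp_pos _).le
      · exact ((Real.log_lt_iff_lt_exp h).1 h2).le
    rcases hor with h | h
    · subst h; exact le_trans (le_max_left _ _) h3
    · subst h; exact le_trans (le_max_right _ _) h3
  -- continuity of T and f
  have hTc : ContinuousOn T (openSector a b) := hT.continuousOn
  have hfc : ContinuousOn f (openSector a b) := by
    simp only [hfdef]
    apply ContinuousOn.smul
    · exact (Complex.continuous_exp.comp
        ((continuous_const.mul continuous_id).mul continuous_const)).continuousOn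
    · exact hTc.mul continuousOn_const
  -- bound for T on the compact annulus 1/2 ≤ ρ ≤ 1
  obtain ⟨C₂', hC₂'⟩ := S2Aux.compact_bound hTc (1/2) 1 α β
    (fun ρ hρ θ hθ => S2Aux.mem_open (lt_of_lt_of_le (by norm_num) hρ.1) (hIoo θ hθ))
  set C₂ : ℝ := max C₂' 1 with hC₂def
  have hC₂1 : (1:ℝ) ≤ C₂ := le_max_right _ _
  have hC₂ : ∀ ρ ∈ Set.Icc (1/2:ℝ) 1, ∀ θ ∈ Set.Icc α β,
      ‖T ((ρ:ℂ) * Complex.exp ((θ:ℂ) * Complex.I))‖ ≤ C₂ :=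
    fun ρ h1 θ h2 => le_trans (hC₂' ρ h1 θ h2) (le_max_left _ _)
  have hlogC₂ : 0 ≤ Real.log C₂ := Real.log_nonneg hC₂1
  -- crude exponential bound on the whole sector for ρ ≥ 1
  set K₀ : ℝ := 2 * Real.log C₂ with hK₀def
  have hK₀0 : 0 ≤ K₀ := by rw [hK₀def]; linarith
  have hcrude : ∀ ρ : ℝ, 1 ≤ ρ → ∀ θ ∈ Set.Icc α β,
      ‖T ((ρ:ℂ) * Complex.exp ((θ:ℂ) * Complex.I))‖ ≤ Real.exp (K₀ * ρ) := by
    intro ρ hρ1 θ hθ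
    have hρ0 : (0:ℝ) < ρ := lt_of_lt_of_le one_pos hρ1
    have hn1 : 1 ≤ ⌈ρ⌉₊ := Nat.one_le_ceil_iff.2 hρ0
    have hn0 : (0:ℝ) < (⌈ρ⌉₊ : ℝ) := by exact_mod_cast lt_of_lt_of_le one_pos (by exact_mod_cast hn1)
    have hn_ge : ρ ≤ (⌈ρ⌉₊:ℝ) := Nat.le_ceil ρ
    have hn_lt : (⌈ρ⌉₊:ℝ) < ρ + 1 := Nat.ceil_lt_add_one hρ0.le
    obtain ⟨m, hm⟩ := Nat.exists_eq_add_of_le hn1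
    set σ : ℝ := ρ / (⌈ρ⌉₊:ℝ) with hσdef
    have hσpos : 0 < σ := div_pos hρ0 hn0
    have hσle : σ ≤ 1 := by rw [hσdef, div_le_one hn0]; exact hn_ge
    have hσge : (1/2:ℝ) ≤ σ := by
      rw [hσdef, le_div_iff₀ hn0]
      nlinarith
    have heq : (((m:ℝ) + 1) * σ : ℝ) = ρ := by
      have hmc : ((m:ℝ) + 1) = (⌈ρ⌉₊:ℝ) := by
        rw [hm]; push_cast; ring
      rw [hmc, hσdef]
      field_simp
    calc ‖T ((ρ:ℂ) * Complex.exp ((θ:ℂ) * Complex.I))‖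
        = ‖T (((((m:ℝ) + 1) * σ : ℝ):ℂ) * Complex.exp ((θ:ℂ) * Complex.I))‖ := by rw [heq]
      _ ≤ ‖T ((σ:ℂ) * Complex.exp ((θ:ℂ) * Complex.I))‖ ^ (m + 1) :=
          S2Aux.T_pow hsg (hIoo θ hθ) hσpos m
      _ ≤ C₂ ^ (m + 1) := pow_le_pow_left₀ (norm_nonneg _) (hC₂ σ ⟨hσge, hσle⟩ θ hθ) _
      _ = Real.exp (((m:ℕ) + 1 : ℕ) * Real.log C₂) := by
          rw [Real.exp_nat_mul, Real.exp_log (lt_of_lt_of_le one_pos hC₂1)]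
      _ ≤ Real.exp (K₀ * ρ) := by
          apply Real.exp_le_exp.2
          have hmρ : ((m:ℕ) + 1 : ℕ) ≤ (2:ℝ) * ρ := by
            push_cast
            have : ((m:ℝ) + 1) = (⌈ρ⌉₊:ℝ) := by rw [hm]; push_cast; ring
            nlinarith
          rw [hK₀def]
          nlinarith
  -- norm formula for f on rays
  have hnorm : ∀ ρ θ : ℝ, ‖f ((ρ:ℂ) * Complex.exp ((θ:ℂ) * Complex.I))‖
      = Real.exp (-(lam * (ρ * Real.cos (θ - γ))))
        * ‖T ((ρ:ℂ) * Complex.exp ((θ:ℂ) * Complex.I)) * u‖ := by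
    intro ρ θ
    simp only [hfdef]
    rw [norm_smul, S2Aux.norm_exp_factor]
  -- small scale and medium scale bounds for f on the closed sector
  set d : ℝ := min δ 1 with hddef
  have hd0 : 0 < d := lt_min hδ0 one_pos
  have hd1 : d ≤ 1 := min_le_right _ _
  have hdδ : d ≤ δ := min_le_left _ _
  have hsmall : ∀ θ ∈ Set.Icc α β, ∀ ρ : ℝ, 0 < ρ → ρ < d →
      ‖f ((ρ:ℂ) * Complex.exp ((θ:ℂ) * Complex.I))‖ ≤ Real.exp |lam| * C₀ := by
    intro θ hθ ρ hρ hρd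
    rw [hnorm]
    have h1 : ρ ≤ 1 := le_of_lt (lt_of_lt_of_le hρd hd1)
    have hexp : Real.exp (-(lam * (ρ * Real.cos (θ - γ)))) ≤ Real.exp |lam| := by
      apply Real.exp_le_exp.2
      calc -(lam * (ρ * Real.cos (θ - γ))) ≤ |lam * (ρ * Real.cos (θ - γ))| := neg_le_abs _
        _ = |lam| * (ρ * |Real.cos (θ - γ)|) := by
            rw [abs_mul, abs_mul, _root_.abs_of_nonneg hρ.le]
        _ ≤ |lam| * (1 * 1) := by
            apply mul_le_mul_of_nonneg_left _ (abs_nonneg lam)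
            exact mul_le_mul h1 (Real.abs_cos_le_one _) (abs_nonneg _) one_pos.le
        _ = |lam| := by ring
    exact mul_le_mul hexp (hC₀ θ hθ ρ hρ (lt_of_lt_of_le hρd hdδ)) (norm_nonneg _)
      (Real.exp_pos _).le
  set R₁ : ℝ := R₀ + 1 with hR₁def
  obtain ⟨C₃', hC₃'⟩ := S2Aux.compact_bound hfc d R₁ α β
    (fun ρ hρ θ hθ => S2Aux.mem_open (lt_of_lt_of_le hd0 hρ.1) (hIoo θ hθ))
  set C₃ : ℝ := max C₃' 0 with hC₃def
  have hC₃0 : 0 ≤ C₃ := le_max_right _ _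
  have hC₃ : ∀ ρ ∈ Set.Icc d R₁, ∀ θ ∈ Set.Icc α β,
      ‖f ((ρ:ℂ) * Complex.exp ((θ:ℂ) * Complex.I))‖ ≤ C₃ :=
    fun ρ h1 θ h2 => le_trans (hC₃' ρ h1 θ h2) (le_max_left _ _)
  -- the boundary-ray bound
  set Cray : ℝ := max (Real.exp |lam| * C₀) (max C₃ (Real.exp |M| * C₀)) with hCraydef
  have hray : ∀ θ₀ : ℝ, θ₀ ∈ Set.Icc α β → (θ₀ = α ∨ θ₀ = β) → ∀ ρ : ℝ, 0 < ρ →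
      ‖f ((ρ:ℂ) * Complex.exp ((θ₀:ℂ) * Complex.I))‖ ≤ Cray := by
    intro θ₀ hθ₀ hor ρ hρ
    have hcosθ : Real.cos (θ₀ - γ) = Real.cos ψ := by
      rcases hor with h | h
      · rw [h]
        have h1 : α - γ = -ψ := by rw [hγdef, hψdef]; ring
        rw [h1, Real.cos_neg]
      · rw [h]
        have h1 : β - γ = ψ := by rw [hγdef, hψdef]; ring
        rw [h1]
    rcases lt_or_ge ρ d with h1 | h1
    · exact le_trans (hsmall θ₀ hθ₀ ρ hρ h1) (le_max_left _ _)
    rcases le_or_gt ρ R₁ with h2 | h2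
    · exact le_trans (hC₃ ρ ⟨h1, h2⟩ θ₀ hθ₀) (le_trans (le_max_left _ _) (le_max_right _ _))
    -- large ρ
    rw [hnorm, hcosθ]
    have hd2 : 0 < d/2 := by linarith
    have hsplit : T ((ρ:ℂ) * Complex.exp ((θ₀:ℂ) * Complex.I))
        = T (((ρ - d/2 : ℝ):ℂ) * Complex.exp ((θ₀:ℂ) * Complex.I))
          * T (((d/2 : ℝ):ℂ) * Complex.exp ((θ₀:ℂ) * Complex.I)) := by
      have h3 : ρ = (ρ - d/2) + d/2 := by ring
      have h4 : (0:ℝ) < ρ - d/2 := by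
        have : (1:ℝ) ≤ R₁ := by rw [hR₁def]; linarith
        linarith
      calc T ((ρ:ℂ) * Complex.exp ((θ₀:ℂ) * Complex.I))
          = T ((((ρ - d/2) + d/2 : ℝ):ℂ) * Complex.exp ((θ₀:ℂ) * Complex.I)) := by rw [← h3]
        _ = _ := S2Aux.T_split hsg (hIoo θ₀ hθ₀) h4 hd2
    have hTubig : ‖T ((ρ:ℂ) * Complex.exp ((θ₀:ℂ) * Complex.I)) * u‖
        ≤ Real.exp (M * (ρ - d/2)) * C₀ := by
      rw [hsplit, mul_assoc]
      refine le_trans (norm_mul_le _ _) (mul_le_mul ?_ ?_ (norm_nonneg _) (Real.exp_pos _).le)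
      · have hge : R₀ ≤ ρ - d/2 := by rw [hR₁def] at h2; linarith
        exact hRbound _ hge _ hor
      · exact hC₀ θ₀ hθ₀ (d/2) hd2 (by linarith)
    calc Real.exp (-(lam * (ρ * Real.cos ψ)))
          * ‖T ((ρ:ℂ) * Complex.exp ((θ₀:ℂ) * Complex.I)) * u‖
        ≤ Real.exp (-(lam * (ρ * Real.cos ψ))) * (Real.exp (M * (ρ - d/2)) * C₀) :=
          mul_le_mul_of_nonneg_left hTubig (Real.exp_pos _).le
      _ = Real.exp (-(lam * (ρ * Real.cos ψ)) + M * (ρ - d/2)) * C₀ := by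
          rw [← mul_assoc, ← Real.exp_add]
      _ = Real.exp (-(M * (d/2))) * C₀ := by
          congr 1
          rw [hMdef]
          ring
      _ ≤ Real.exp |M| * C₀ := by
          apply mul_le_mul_of_nonneg_right _ hC₀0
          apply Real.exp_le_exp.2
          calc -(M * (d/2)) ≤ |M * (d/2)| := neg_le_abs _
            _ = |M| * (d/2) := by rw [abs_mul, _root_.abs_of_nonneg hd2.le]
            _ ≤ |M| * 1 := mul_le_mul_of_nonneg_left (by linarith) (abs_nonneg _)
            _ = |M| := by ring
      _ ≤ Cray := le_trans (le_max_right _ _) (le_max_right _ _)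
  -- global growth bound
  set B₀ : ℝ := |lam| + K₀ with hB₀def
  have hB₀0 : 0 ≤ B₀ := by rw [hB₀def]; positivity
  set Cg : ℝ := max (Real.exp |lam| * C₀) (max C₃ ‖u‖) with hCgdef
  have hCg0 : 0 ≤ Cg := le_trans (norm_nonneg u) (le_trans (le_max_right _ _) (le_max_right _ _))
  have hglob : ∀ ρ : ℝ, 0 < ρ → ∀ θ ∈ Set.Icc α β,
      ‖f ((ρ:ℂ) * Complex.exp ((θ:ℂ) * Complex.I))‖ ≤ Cg * Real.exp (B₀ * ρ) := by
    intro ρ hρ θ hθ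
    have hone : (1:ℝ) ≤ Real.exp (B₀ * ρ) := Real.one_le_exp (by positivity)
    rcases lt_or_ge ρ d with h1 | h1
    · calc ‖f ((ρ:ℂ) * Complex.exp ((θ:ℂ) * Complex.I))‖
          ≤ Real.exp |lam| * C₀ := hsmall θ hθ ρ hρ h1
        _ ≤ Cg := le_max_left _ _
        _ ≤ Cg * Real.exp (B₀ * ρ) := le_mul_of_one_le_right hCg0 hone
    rcases le_or_gt ρ R₁ with h2 | h2
    · calc ‖f ((ρ:ℂ) * Complex.exp ((θ:ℂ) * Complex.I))‖
          ≤ C₃ := hC₃ ρ ⟨h1, h2⟩ θ hθ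
        _ ≤ Cg := le_trans (le_max_left _ _) (le_max_right _ _)
        _ ≤ Cg * Real.exp (B₀ * ρ) := le_mul_of_one_le_right hCg0 hone
    have hρ1 : (1:ℝ) ≤ ρ := by
      have : (1:ℝ) ≤ R₁ := by rw [hR₁def]; linarith
      linarith
    rw [hnorm]
    have hexp : Real.exp (-(lam * (ρ * Real.cos (θ - γ)))) ≤ Real.exp (|lam| * ρ) := by
      apply Real.exp_le_exp.2
      calc -(lam * (ρ * Real.cos (θ - γ))) ≤ |lam * (ρ * Real.cos (θ - γ))| := neg_le_abs _
        _ = |lam| * (ρ * |Real.cos (θ - γ)|) := by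
            rw [abs_mul, abs_mul, _root_.abs_of_nonneg hρ.le]
        _ ≤ |lam| * (ρ * 1) := by
            apply mul_le_mul_of_nonneg_left _ (abs_nonneg lam)
            exact mul_le_mul_of_nonneg_left (Real.abs_cos_le_one _) hρ.le
        _ = |lam| * ρ := by ring
    have hTbound : ‖T ((ρ:ℂ) * Complex.exp ((θ:ℂ) * Complex.I)) * u‖
        ≤ Real.exp (K₀ * ρ) * ‖u‖ :=
      le_trans (norm_mul_le _ _)
        (mul_le_mul_of_nonneg_right (hcrude ρ hρ1 θ hθ) (norm_nonneg _))
    calc Real.exp (-(lam * (ρ * Real.cos (θ - γ))))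
          * ‖T ((ρ:ℂ) * Complex.exp ((θ:ℂ) * Complex.I)) * u‖
        ≤ Real.exp (|lam| * ρ) * (Real.exp (K₀ * ρ) * ‖u‖) :=
          mul_le_mul hexp hTbound (norm_nonneg _) (Real.exp_pos _).le
      _ = ‖u‖ * Real.exp (B₀ * ρ) := by
          rw [← mul_assoc, ← Real.exp_add, hB₀def]; ring_nf
      _ ≤ Cg * Real.exp (B₀ * ρ) :=
          mul_le_mul_of_nonneg_right
            (le_trans (le_max_right _ _) (le_max_right _ _)) (Real.exp_pos _).le
  -- now conclude
  refine ⟨Cray, fun ζ hζ => ?_⟩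
  obtain ⟨ρ, hρ, θ, hθ, rfl⟩ := S2Aux.exists_ray hζ
  rcases eq_or_lt_of_le hαβ with heq | hlt
  · -- degenerate case: a single ray
    have hθα : θ = α := le_antisymm (heq ▸ hθ.2) hθ.1
    subst hθα
    exact hray θ hθ (Or.inl rfl) ρ hρ
  -- Phragmén–Lindelöf on the strip α < im w < β
  have hfdiff : DifferentiableOn ℂ f (openSector a b) := by
    simp only [hfdef]
    apply DifferentiableOn.smul
    · exact (((differentiable_id.const_mul (-(lam:ℂ))).mul_const _).cexp).differentiableOn
    · have := ((ContinuousLinearMap.mul ℂ B).flip u).differentiable.comp_differentiableOn hT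
      exact this.congr (fun ζ _ => by simp)
  have hmapsIcc : ∀ w : ℂ, w.im ∈ Set.Icc α β → Complex.exp w ∈ openSector a b := by
    intro w hw
    rw [S2Aux.exp_eq_ray w]
    exact S2Aux.mem_open (Real.exp_pos _) (hIoo _ hw)
  have hfd : DiffContOnCl ℂ (fun w => f (Complex.exp w)) (Complex.im ⁻¹' Set.Ioo α β) := by
    constructor
    · exact DifferentiableOn.comp hfdiff Complex.differentiable_exp.differentiableOn
        (fun w hw => hmapsIcc w ⟨hw.1.le, hw.2.le⟩)
    · have hsub : closure (Complex.im ⁻¹' Set.Ioo α β) ⊆ Complex.im ⁻¹' Set.Icc α β :=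
        closure_minimal (fun w hw => ⟨hw.1.le, hw.2.le⟩)
          (IsClosed.preimage Complex.continuous_im isClosed_Icc)
      exact (ContinuousOn.comp hfc Complex.continuous_exp.continuousOn
        (fun w hw => hmapsIcc w hw)).mono hsub
  have hB : ∃ c < Real.pi / (β - α), ∃ B' : ℝ,
      (fun w => f (Complex.exp w)) =O[Filter.comap (_root_.abs ∘ Complex.re) Filter.atTop
        ⊓ Filter.principal (Complex.im ⁻¹' Set.Ioo α β)]
        fun w => Real.exp (B' * Real.exp (c * |w.re|)) := by
    refine ⟨1, (one_lt_div (by linarith)).2 hβα, B₀, ?_⟩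
    apply Asymptotics.IsBigO.of_bound Cg
    rw [Filter.eventually_inf_principal]
    apply Filter.Eventually.of_forall
    intro w hw
    have h1 : ‖f (Complex.exp w)‖ ≤ Cg * Real.exp (B₀ * Real.exp w.re) := by
      rw [S2Aux.exp_eq_ray w]
      exact hglob (Real.exp w.re) (Real.exp_pos _) w.im ⟨hw.1.le, hw.2.le⟩
    have h2 : Real.exp (B₀ * Real.exp w.re) ≤ Real.exp (B₀ * Real.exp (1 * |w.re|)) := by
      apply Real.exp_le_exp.2
      apply mul_le_mul_of_nonneg_left _ hB₀0
      rw [one_mul]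
      exact Real.exp_le_exp.2 (le_abs_self _)
    calc ‖f (Complex.exp w)‖ ≤ Cg * Real.exp (B₀ * Real.exp (1 * |w.re|)) :=
          le_trans h1 (mul_le_mul_of_nonneg_left h2 hCg0)
      _ = Cg * ‖Real.exp (B₀ * Real.exp (1 * |w.re|))‖ := by
          rw [Real.norm_eq_abs, _root_.abs_of_pos (Real.exp_pos _)]
  have hle_a : ∀ w : ℂ, w.im = α → ‖(fun w => f (Complex.exp w)) w‖ ≤ Cray := by
    intro w hw
    show ‖f (Complex.exp w)‖ ≤ Cray
    rw [S2Aux.exp_eq_ray w, hw]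
    exact hray α ⟨le_rfl, hαβ⟩ (Or.inl rfl) _ (Real.exp_pos _)
  have hle_b : ∀ w : ℂ, w.im = β → ‖(fun w => f (Complex.exp w)) w‖ ≤ Cray := by
    intro w hw
    show ‖f (Complex.exp w)‖ ≤ Cray
    rw [S2Aux.exp_eq_ray w, hw]
    exact hray β ⟨hαβ, le_rfl⟩ (Or.inr rfl) _ (Real.exp_pos _)
  have hres : ‖(fun w => f (Complex.exp w)) (((Real.log ρ : ℝ):ℂ) + (θ:ℂ) * Complex.I)‖
      ≤ Cray := by
    apply PhragmenLindelof.horizontal_strip hfd hB hle_a hle_b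
    · simpa using hθ.1
    · simpa using hθ.2
  show ‖f ((ρ:ℂ) * Complex.exp ((θ:ℂ) * Complex.I))‖ ≤ Cray
  rw [← S2Aux.exp_log_ray hρ θ]
  exact hres
end
end

section
/- Let a < b ≤ a + π, let 𝔅 be a complex Banach algebra, let T : S_{a,b} → 𝔅 be a holomorphic semigroup, let a < α ≤ β < b, and let u ∈ 𝔅 satisfy limsup_{ζ→0, ζ∈S̄_{α,β}∖{0}} ‖T(ζ)u‖ < +∞. Assume limsup_{r→∞} (log max(‖T(re^{iα})‖, ‖T(re^{iβ})‖))/r < +∞. Then limsup_{λ→+∞} [ sup_{ζ ∈ S̄_{α,β}∖{0}} ‖ e^{−λ ζ e^{−i(α+β)/2}} T(ζ)u ‖ ] = limsup_{ζ→0, ζ∈S̄_{α,β}∖{0}} ‖T(ζ)u‖. (Lemma 4.1(ii)) -/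
open Filter Topology Set
open scoped ENNReal
open scoped NNReal

noncomputable section

namespace Statement3Aux

lemma abs_mul_exp (ρ θ : ℝ) (hρ : 0 ≤ ρ) :
    ‖(ρ : ℂ) * Complex.exp ((θ : ℂ) * Complex.I)‖ = ρ := by
  rw [norm_mul, Complex.norm_exp_ofReal_mul_I, Complex.norm_real, Real.norm_eq_abs, mul_one, abs_of_nonneg hρ]

lemma mem_closed {α β ρ θ : ℝ} (hρ : 0 < ρ) (hθ : θ ∈ Set.Icc α β) :
    (ρ : ℂ) * Complex.exp ((θ : ℂ) * Complex.I) ∈ closedSector α β \ {0} := by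
  refine ⟨⟨ρ, hρ.le, θ, hθ, rfl⟩, ?_⟩
  simp only [Set.mem_singleton_iff]
  exact mul_ne_zero (Complex.ofReal_ne_zero.mpr hρ.ne') (Complex.exp_ne_zero _)

lemma mem_open {a b α β ρ θ : ℝ} (hαa : a < α) (hβb : β < b) (hρ : 0 < ρ)
    (hθ : θ ∈ Set.Icc α β) :
    (ρ : ℂ) * Complex.exp ((θ : ℂ) * Complex.I) ∈ openSector a b :=
  ⟨ρ, hρ, θ, ⟨lt_of_lt_of_le hαa hθ.1, lt_of_le_of_lt hθ.2 hβb⟩, rfl⟩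

lemma growth_aux {B : Type*} [NonUnitalNormedRing B]
    (T : ℂ → B) (a b α β δ M : ℝ)
    (hsg : ∀ ζ ∈ openSector a b, ∀ ζ' ∈ openSector a b, T (ζ + ζ') = T ζ * T ζ')
    (hαa : a < α) (hβb : β < b) (hδ : 0 < δ) (hM : 1 ≤ M)
    (hbase : ∀ ρ θ, δ / 2 ≤ ρ → ρ ≤ δ → θ ∈ Set.Icc α β →
      ‖T ((ρ : ℂ) * Complex.exp ((θ : ℂ) * Complex.I))‖ ≤ M) :
    ∀ ρ θ, δ / 2 ≤ ρ → θ ∈ Set.Icc α β →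
      ‖T ((ρ : ℂ) * Complex.exp ((θ : ℂ) * Complex.I))‖ ≤ M ^ (2 * ρ / δ) := by
  have hM0 : (0 : ℝ) < M := lt_of_lt_of_le one_pos hM
  have key : ∀ n : ℕ, ∀ ρ θ, δ / 2 ≤ ρ → ρ ≤ 2 ^ n * δ → θ ∈ Set.Icc α β →
      ‖T ((ρ : ℂ) * Complex.exp ((θ : ℂ) * Complex.I))‖ ≤ M ^ (2 * ρ / δ) := by
    intro n
    induction n with
    | zero =>
      intro ρ θ h1 h2 hθ
      rw [pow_zero, one_mul] at h2
      calc ‖T ((ρ : ℂ) * Complex.exp ((θ : ℂ) * Complex.I))‖ ≤ M := hbase ρ θ h1 h2 hθ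
      _ = M ^ (1 : ℝ) := (Real.rpow_one M).symm
      _ ≤ M ^ (2 * ρ / δ) := Real.rpow_le_rpow_of_exponent_le hM
          (by rw [le_div_iff₀ hδ]; linarith)
    | succ n ih =>
      intro ρ θ h1 h2 hθ
      by_cases hsmall : ρ ≤ 2 ^ n * δ
      · exact ih ρ θ h1 hsmall hθ
      push_neg at hsmall
      have h2n : (1 : ℝ) ≤ 2 ^ n := one_le_pow₀ (by norm_num)
      have hδρ : δ ≤ ρ := by nlinarith
      have h1' : δ / 2 ≤ ρ / 2 := by linarith
      have h2' : ρ / 2 ≤ 2 ^ n * δ := by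
        rw [pow_succ] at h2; linarith
      have ihh := ih (ρ / 2) θ h1' h2' hθ
      have hρ2 : (0 : ℝ) < ρ / 2 := by linarith
      have heq : (ρ : ℂ) * Complex.exp ((θ : ℂ) * Complex.I)
          = ((ρ / 2 : ℝ) : ℂ) * Complex.exp ((θ : ℂ) * Complex.I)
            + ((ρ / 2 : ℝ) : ℂ) * Complex.exp ((θ : ℂ) * Complex.I) := by
        push_cast; ring
      rw [heq, hsg _ (mem_open hαa hβb hρ2 hθ) _ (mem_open hαa hβb hρ2 hθ)]
      calc ‖T (((ρ / 2 : ℝ) : ℂ) * Complex.exp ((θ : ℂ) * Complex.I))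
              * T (((ρ / 2 : ℝ) : ℂ) * Complex.exp ((θ : ℂ) * Complex.I))‖
          ≤ ‖T (((ρ / 2 : ℝ) : ℂ) * Complex.exp ((θ : ℂ) * Complex.I))‖
            * ‖T (((ρ / 2 : ℝ) : ℂ) * Complex.exp ((θ : ℂ) * Complex.I))‖ := norm_mul_le _ _
      _ ≤ M ^ (2 * (ρ / 2) / δ) * M ^ (2 * (ρ / 2) / δ) :=
          mul_le_mul ihh ihh (norm_nonneg _) (Real.rpow_nonneg hM0.le _)
      _ = M ^ (2 * ρ / δ) := by
          rw [← Real.rpow_add hM0]; ring_nf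
  intro ρ θ h1 hθ
  obtain ⟨n, hn⟩ := pow_unbounded_of_one_lt (ρ / δ) (one_lt_two (α := ℝ))
  exact key n ρ θ h1 (by rw [div_lt_iff₀ hδ] at hn; nlinarith) hθ

end Statement3Aux

open Statement3Aux

set_option maxHeartbeats 1000000 in
/-- Lemma 4.1(ii). -/
theorem statement3
    {B : Type*} [NonUnitalNormedRing B] [NormedSpace ℂ B]
    [IsScalarTower ℂ B B] [SMulCommClass ℂ B B] [CompleteSpace B]
    (a b : ℝ) (hab : a < b) (hba : b ≤ a + Real.pi)
    (T : ℂ → B)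
    (hT : DifferentiableOn ℂ T (openSector a b))
    (hsg : ∀ ζ ∈ openSector a b, ∀ ζ' ∈ openSector a b, T (ζ + ζ') = T ζ * T ζ')
    (α β : ℝ) (hαa : a < α) (hαβ : α ≤ β) (hβb : β < b)
    (u : B)
    (hu : ∃ C : ℝ, ∀ᶠ ζ in 𝓝[closedSector α β \ {0}] (0 : ℂ), ‖T ζ * u‖ ≤ C)
    (hgrowth : Filter.limsup
      (fun r : ℝ =>
        ((Real.log (max ‖T ((r : ℂ) * Complex.exp ((α : ℂ) * Complex.I))‖
            ‖T ((r : ℂ) * Complex.exp ((β : ℂ) * Complex.I))‖) / r : ℝ) : EReal))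
      Filter.atTop < ⊤) :
    Filter.limsup
      (fun lam : ℝ =>
        ⨆ ζ ∈ closedSector α β \ {0},
          (‖Complex.exp (-(lam : ℂ) * ζ * Complex.exp (-(((α + β) / 2 : ℝ) : ℂ) * Complex.I)) •
              (T ζ * u)‖₊ : ℝ≥0∞))
      Filter.atTop
    = Filter.limsup (fun ζ : ℂ => (‖T ζ * u‖₊ : ℝ≥0∞))
        (𝓝[closedSector α β \ {0}] (0 : ℂ)) := by
  classical
  set s : Set ℂ := closedSector α β \ {0} with hs
  set mid : ℝ := (α + β) / 2 with hmid
  set ω : ℂ := Complex.exp (-(mid : ℂ) * Complex.I) with hω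
  set c : ℝ := Real.cos ((β - α) / 2) with hcdef
  have hβα : β - α < Real.pi := by linarith
  have hc : 0 < c :=
    Real.cos_pos_of_mem_Ioo ⟨by linarith [Real.pi_pos], by linarith⟩
  -- every element of `s` has polar form with positive radius and angle in `[α, β]`
  have hdecomp : ∀ ζ ∈ s, ∃ r θ : ℝ, 0 < r ∧ θ ∈ Set.Icc α β ∧
      ζ = (r : ℂ) * Complex.exp ((θ : ℂ) * Complex.I) := by
    rintro ζ ⟨⟨r, hr, θ, hθ, rfl⟩, hne⟩
    refine ⟨r, θ, ?_, hθ, rfl⟩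
    rcases hr.lt_or_eq with h | h
    · exact h
    · exact absurd (by simp [← h]) hne
  -- real part computation
  have hre : ∀ (r θ : ℝ), (((r : ℂ) * Complex.exp ((θ : ℂ) * Complex.I)) * ω).re
      = r * Real.cos (θ - mid) := by
    intro r θ
    have h1 : ((r : ℂ) * Complex.exp ((θ : ℂ) * Complex.I)) * ω
        = (r : ℂ) * Complex.exp (((θ - mid : ℝ) : ℂ) * Complex.I) := by
      rw [hω, mul_assoc, ← Complex.exp_add]
      push_cast
      ring_nf
    rw [h1, Complex.re_ofReal_mul, Complex.exp_ofReal_mul_I_re]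
  have hcos : ∀ θ ∈ Set.Icc α β, c ≤ Real.cos (θ - mid) := by
    intro θ hθ
    obtain ⟨h1, h2⟩ := hθ
    have habs : |θ - mid| ≤ (β - α) / 2 := by
      rw [abs_le, hmid]
      constructor <;> linarith
    rw [← Real.cos_abs (θ - mid)]
    exact Real.cos_le_cos_of_nonneg_of_le_pi (abs_nonneg _) (by linarith [Real.pi_pos]) habs
  -- norm of the exponential factor
  have hznorm : ∀ (t : ℝ) (ζ : ℂ), ‖Complex.exp (-(t : ℂ) * ζ * ω)‖
      = Real.exp (-(t * (ζ * ω).re)) := by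
    intro t ζ
    rw [Complex.norm_exp]
    congr 1
    have h : -(t : ℂ) * ζ * ω = ((-t : ℝ) : ℂ) * (ζ * ω) := by push_cast; ring
    rw [h, Complex.re_ofReal_mul]; ring
  set L : ℝ≥0∞ := Filter.limsup (fun ζ : ℂ => (‖T ζ * u‖₊ : ℝ≥0∞)) (𝓝[s] (0 : ℂ)) with hL
  have hLtop : L ≠ ⊤ := by
    obtain ⟨C, hC⟩ := hu
    have : L ≤ ENNReal.ofReal C := by
      apply Filter.limsup_le_of_le (by isBoundedDefault)
      filter_upwards [hC] with ζ hζ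
      rw [← ENNReal.ofReal_coe_nnreal, coe_nnnorm]
      exact ENNReal.ofReal_le_ofReal hζ
    exact (this.trans_lt ENNReal.ofReal_lt_top).ne
  apply le_antisymm
  · -- limsup of sups is at most L
    apply ENNReal.le_of_forall_pos_le_add
    intro ε hε _
    have hev : ∀ᶠ ζ in 𝓝[s] (0 : ℂ), (‖T ζ * u‖₊ : ℝ≥0∞) < L + ε := by
      apply Filter.eventually_lt_of_limsup_lt _ (by isBoundedDefault)
      rw [← hL]
      exact ENNReal.lt_add_right hLtop (by exact_mod_cast hε.ne')
    obtain ⟨δ, hδ, hball⟩ := Metric.mem_nhdsWithin_iff.mp hev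
    have hsmallb : ∀ ρ θ : ℝ, 0 < ρ → ρ < δ → θ ∈ Set.Icc α β →
        (‖T ((ρ : ℂ) * Complex.exp ((θ : ℂ) * Complex.I)) * u‖₊ : ℝ≥0∞) ≤ L + ε := by
      intro ρ θ h0 h1 hθ
      refine le_of_lt (hball ⟨?_, mem_closed h0 hθ⟩)
      rw [Metric.mem_ball, dist_zero_right, abs_mul_exp ρ θ h0.le]
      exact h1
    -- compact bound on the mid annulus of the sector
    set Kc : Set ℂ := (fun p : ℝ × ℝ => (p.1 : ℂ) * Complex.exp ((p.2 : ℂ) * Complex.I)) ''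
        (Set.Icc (δ / 2) δ ×ˢ Set.Icc α β) with hKc
    have hKccompact : IsCompact Kc := by
      apply (isCompact_Icc.prod isCompact_Icc).image
      fun_prop
    have hKcsub : Kc ⊆ openSector a b := by
      rintro z ⟨⟨ρ, θ⟩, ⟨hρ, hθ⟩, rfl⟩
      exact mem_open hαa hβb (lt_of_lt_of_le (by linarith) hρ.1) hθ
    obtain ⟨M₀, hM₀⟩ := hKccompact.exists_bound_of_continuousOn (hT.continuousOn.mono hKcsub)
    set M : ℝ := max M₀ 1 with hMdef
    have hM1 : 1 ≤ M := le_max_right _ _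
    have hM0 : (0 : ℝ) < M := lt_of_lt_of_le one_pos hM1
    have hbase : ∀ ρ θ : ℝ, δ / 2 ≤ ρ → ρ ≤ δ → θ ∈ Set.Icc α β →
        ‖T ((ρ : ℂ) * Complex.exp ((θ : ℂ) * Complex.I))‖ ≤ M :=
      fun ρ θ h1 h2 hθ =>
        le_trans (hM₀ _ ⟨(ρ, θ), ⟨⟨h1, h2⟩, hθ⟩, rfl⟩) (le_max_left _ _)
    have hgrow := growth_aux T a b α β δ M hsg hαa hβb hδ hM1 hbase
    set K : ℝ := 2 * Real.log M / δ with hKdef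
    have hK0 : 0 ≤ K := by
      apply div_nonneg _ hδ.le
      have := Real.log_nonneg hM1
      linarith
    apply Filter.limsup_le_of_le (by isBoundedDefault)
    filter_upwards [eventually_ge_atTop (K / c), eventually_ge_atTop (0 : ℝ)]
      with lam hlam hlam0
    refine iSup₂_le ?_
    intro ζ hζ
    obtain ⟨r, θ, hr, hθ, rfl⟩ := hdecomp ζ hζ
    have hcosθ : c ≤ Real.cos (θ - mid) := hcos θ hθ
    by_cases hrδ : r < δ
    · -- near the origin: the exponential factor has modulus at most 1
      rw [nnnorm_smul, ENNReal.coe_mul]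
      have hone : (‖Complex.exp (-(lam : ℂ) * ((r : ℂ) * Complex.exp ((θ : ℂ) * Complex.I)) * ω)‖₊
          : ℝ≥0∞) ≤ 1 := by
        rw [ENNReal.coe_le_one_iff]
        have : ‖Complex.exp (-(lam : ℂ) * ((r : ℂ) * Complex.exp ((θ : ℂ) * Complex.I)) * ω)‖
            ≤ 1 := by
          rw [hznorm, hre, Real.exp_le_one_iff]
          have : 0 ≤ r * Real.cos (θ - mid) := by nlinarith
          nlinarith
        exact_mod_cast this
      calc (‖Complex.exp (-(lam : ℂ) * ((r : ℂ) * Complex.exp ((θ : ℂ) * Complex.I)) * ω)‖₊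
              : ℝ≥0∞) * (‖T ((r : ℂ) * Complex.exp ((θ : ℂ) * Complex.I)) * u‖₊ : ℝ≥0∞)
          ≤ 1 * (L + ε) := mul_le_mul' hone (hsmallb r θ hr hrδ hθ)
      _ = L + ε := one_mul _
    · -- away from the origin: split off a piece of length δ/2
      push_neg at hrδ
      set ρ₁ : ℝ := r - δ / 2 with hρ₁
      have hρ₁pos : 0 < ρ₁ := by simp only [hρ₁]; linarith
      have hρ₁ge : δ / 2 ≤ ρ₁ := by simp only [hρ₁]; linarith
      have hδ2 : (0 : ℝ) < δ / 2 := by linarith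
      have hsplit : (r : ℂ) * Complex.exp ((θ : ℂ) * Complex.I)
          = ((ρ₁ : ℝ) : ℂ) * Complex.exp ((θ : ℂ) * Complex.I)
            + ((δ / 2 : ℝ) : ℂ) * Complex.exp ((θ : ℂ) * Complex.I) := by
        simp only [hρ₁]; push_cast; ring
      have hT12 : T ((r : ℂ) * Complex.exp ((θ : ℂ) * Complex.I)) * u
          = T (((ρ₁ : ℝ) : ℂ) * Complex.exp ((θ : ℂ) * Complex.I))
            * (T (((δ / 2 : ℝ) : ℂ) * Complex.exp ((θ : ℂ) * Complex.I)) * u) := by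
        rw [hsplit, hsg _ (mem_open hαa hβb hρ₁pos hθ) _ (mem_open hαa hβb hδ2 hθ), mul_assoc]
      rw [hT12, nnnorm_smul, ENNReal.coe_mul]
      have hfac : (‖Complex.exp (-(lam : ℂ) * ((r : ℂ) * Complex.exp ((θ : ℂ) * Complex.I)) * ω)‖₊
          : ℝ≥0∞) * (‖T (((ρ₁ : ℝ) : ℂ) * Complex.exp ((θ : ℂ) * Complex.I))‖₊ : ℝ≥0∞) ≤ 1 := by
        rw [← ENNReal.coe_mul, ENNReal.coe_le_one_iff]
        have hreal : ‖Complex.exp (-(lam : ℂ) * ((r : ℂ) * Complex.exp ((θ : ℂ) * Complex.I)) * ω)‖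
            * ‖T (((ρ₁ : ℝ) : ℂ) * Complex.exp ((θ : ℂ) * Complex.I))‖ ≤ 1 := by
          have h1 : ‖Complex.exp (-(lam : ℂ) * ((r : ℂ) * Complex.exp ((θ : ℂ) * Complex.I)) * ω)‖
              ≤ Real.exp (-(lam * (r * c))) := by
            rw [hznorm, hre, Real.exp_le_exp]
            have : r * c ≤ r * Real.cos (θ - mid) := by nlinarith
            nlinarith
          have h2 : ‖T (((ρ₁ : ℝ) : ℂ) * Complex.exp ((θ : ℂ) * Complex.I))‖
              ≤ Real.exp (K * r) := by
            refine le_trans (hgrow ρ₁ θ hρ₁ge hθ) ?_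
            rw [Real.rpow_def_of_pos hM0, Real.exp_le_exp]
            have hlog : 0 ≤ Real.log M := Real.log_nonneg hM1
            have hρ₁r : ρ₁ ≤ r := by simp only [hρ₁]; linarith
            have hmono : 2 * Real.log M * ρ₁ ≤ 2 * Real.log M * r :=
              mul_le_mul_of_nonneg_left hρ₁r (by linarith)
            rw [hKdef]
            calc Real.log M * (2 * ρ₁ / δ) = 2 * Real.log M * ρ₁ / δ := by ring
            _ ≤ 2 * Real.log M * r / δ := by gcongr
            _ = 2 * Real.log M / δ * r := by ring
          calc ‖Complex.exp (-(lam : ℂ) * ((r : ℂ) * Complex.exp ((θ : ℂ) * Complex.I)) * ω)‖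
              * ‖T (((ρ₁ : ℝ) : ℂ) * Complex.exp ((θ : ℂ) * Complex.I))‖
              ≤ Real.exp (-(lam * (r * c))) * Real.exp (K * r) :=
                mul_le_mul h1 h2 (norm_nonneg _) (Real.exp_nonneg _)
          _ = Real.exp (K * r - lam * (r * c)) := by rw [← Real.exp_add]; ring_nf
          _ ≤ 1 := by
              rw [Real.exp_le_one_iff]
              have hKlam : K ≤ lam * c := by
                rw [div_le_iff₀ hc] at hlam; linarith
              nlinarith
        exact_mod_cast hreal
      calc (‖Complex.exp (-(lam : ℂ) * ((r : ℂ) * Complex.exp ((θ : ℂ) * Complex.I)) * ω)‖₊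
              : ℝ≥0∞)
            * (‖T (((ρ₁ : ℝ) : ℂ) * Complex.exp ((θ : ℂ) * Complex.I))
                * (T (((δ / 2 : ℝ) : ℂ) * Complex.exp ((θ : ℂ) * Complex.I)) * u)‖₊ : ℝ≥0∞)
          ≤ (‖Complex.exp (-(lam : ℂ) * ((r : ℂ) * Complex.exp ((θ : ℂ) * Complex.I)) * ω)‖₊
              : ℝ≥0∞)
            * ((‖T (((ρ₁ : ℝ) : ℂ) * Complex.exp ((θ : ℂ) * Complex.I))‖₊ : ℝ≥0∞)
              * (‖T (((δ / 2 : ℝ) : ℂ) * Complex.exp ((θ : ℂ) * Complex.I)) * u‖₊ : ℝ≥0∞)) := by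
            refine mul_le_mul' le_rfl ?_
            rw [← ENNReal.coe_mul]
            exact_mod_cast nnnorm_mul_le _ _
      _ = ((‖Complex.exp (-(lam : ℂ) * ((r : ℂ) * Complex.exp ((θ : ℂ) * Complex.I)) * ω)‖₊
              : ℝ≥0∞)
            * (‖T (((ρ₁ : ℝ) : ℂ) * Complex.exp ((θ : ℂ) * Complex.I))‖₊ : ℝ≥0∞))
            * (‖T (((δ / 2 : ℝ) : ℂ) * Complex.exp ((θ : ℂ) * Complex.I)) * u‖₊ : ℝ≥0∞) := by
            ring
      _ ≤ 1 * (L + ε) := mul_le_mul' hfac (hsmallb (δ / 2) θ hδ2 (by linarith) hθ)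
      _ = L + ε := one_mul _
  · -- L is at most the limsup of the sups
    apply Filter.le_limsup_of_frequently_le _ (by isBoundedDefault)
    apply ((eventually_ge_atTop (0 : ℝ)).and (eventually_ge_atTop (0:ℝ))).frequently.mono
    rintro lam ⟨hlam0, -⟩
    apply ENNReal.le_of_forall_lt_one_mul_le
    intro x hx
    rcases eq_or_ne x 0 with rfl | hx0
    · simp
    lift x to ℝ≥0 using hx.ne_top
    have hx0' : x ≠ 0 := by exact_mod_cast hx0
    have hx1 : (x : ℝ) < 1 := by exact_mod_cast hx
    have hxpos : (0 : ℝ) < (x : ℝ) := by positivity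
    have hxinv : (1 : ℝ) < (x : ℝ)⁻¹ := (one_lt_inv₀ hxpos).mpr hx1
    set r₀ : ℝ := Real.log ((x : ℝ)⁻¹) / (lam + 1) with hr₀def
    have hlog : 0 < Real.log ((x : ℝ)⁻¹) := Real.log_pos hxinv
    have hr₀ : 0 < r₀ := div_pos hlog (by linarith)
    set Sl : ℝ≥0∞ := ⨆ ζ ∈ s,
        (‖Complex.exp (-(lam : ℂ) * ζ * ω) • (T ζ * u)‖₊ : ℝ≥0∞) with hSl
    have hevb : ∀ᶠ ζ in 𝓝[s] (0 : ℂ),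
        (‖T ζ * u‖₊ : ℝ≥0∞) ≤ ENNReal.ofReal ((x : ℝ)⁻¹) * Sl := by
      have hball : ∀ᶠ ζ in 𝓝[s] (0 : ℂ), ζ ∈ Metric.ball (0 : ℂ) r₀ :=
        eventually_mem_nhdsWithin.mp (Filter.eventually_of_mem
          (mem_nhdsWithin_of_mem_nhds (Metric.ball_mem_nhds _ hr₀)) (fun ζ h _ => h))
      filter_upwards [hball, eventually_mem_nhdsWithin] with ζ hζball hζs
      obtain ⟨r, θ, hr, hθ, rfl⟩ := hdecomp ζ hζs
      have hrlt : r < r₀ := by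
        have := hζball
        rw [Metric.mem_ball, dist_zero_right, abs_mul_exp r θ hr.le] at this
        exact this
      have hid : T ((r : ℂ) * Complex.exp ((θ : ℂ) * Complex.I)) * u
          = Complex.exp ((lam : ℂ) * ((r : ℂ) * Complex.exp ((θ : ℂ) * Complex.I)) * ω)
            • (Complex.exp (-(lam : ℂ) * ((r : ℂ) * Complex.exp ((θ : ℂ) * Complex.I)) * ω)
              • (T ((r : ℂ) * Complex.exp ((θ : ℂ) * Complex.I)) * u)) := by
        rw [smul_smul, ← Complex.exp_add]
        have : (lam : ℂ) * ((r : ℂ) * Complex.exp ((θ : ℂ) * Complex.I)) * ω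
            + -(lam : ℂ) * ((r : ℂ) * Complex.exp ((θ : ℂ) * Complex.I)) * ω = 0 := by ring
        rw [this, Complex.exp_zero, one_smul]
      rw [hid, nnnorm_smul, ENNReal.coe_mul]
      have hfac : (‖Complex.exp ((lam : ℂ) * ((r : ℂ) * Complex.exp ((θ : ℂ) * Complex.I)) * ω)‖₊
          : ℝ≥0∞) ≤ ENNReal.ofReal ((x : ℝ)⁻¹) := by
        rw [← ENNReal.ofReal_coe_nnreal, coe_nnnorm]
        apply ENNReal.ofReal_le_ofReal
        have heq : (lam : ℂ) * ((r : ℂ) * Complex.exp ((θ : ℂ) * Complex.I)) * ω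
            = -((-lam : ℝ) : ℂ) * ((r : ℂ) * Complex.exp ((θ : ℂ) * Complex.I)) * ω := by
          push_cast; ring
        rw [heq, hznorm, hre]
        have hcos1 : Real.cos (θ - mid) ≤ 1 := Real.cos_le_one _
        have h1 : -(-lam * (r * Real.cos (θ - mid))) ≤ Real.log ((x : ℝ)⁻¹) := by
          have h2 : lam * (r * Real.cos (θ - mid)) ≤ lam * r := by
            nlinarith [mul_nonneg (mul_nonneg hlam0 hr.le) (sub_nonneg.mpr hcos1)]
          have h3 : lam * r ≤ (lam + 1) * r₀ := by nlinarith
          have h4 : (lam + 1) * r₀ = Real.log ((x : ℝ)⁻¹) := by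
            rw [hr₀def]; field_simp
          nlinarith
        calc Real.exp (-(-lam * (r * Real.cos (θ - mid))))
            ≤ Real.exp (Real.log ((x : ℝ)⁻¹)) := Real.exp_le_exp.mpr h1
        _ = (x : ℝ)⁻¹ := Real.exp_log (by positivity)
      have hSle : (‖Complex.exp (-(lam : ℂ) * ((r : ℂ) * Complex.exp ((θ : ℂ) * Complex.I)) * ω)
          • (T ((r : ℂ) * Complex.exp ((θ : ℂ) * Complex.I)) * u)‖₊ : ℝ≥0∞) ≤ Sl := by
        rw [hSl]
        exact le_iSup₂ (f := fun (ζ : ℂ) (_ : ζ ∈ s) =>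
          (‖Complex.exp (-(lam : ℂ) * ζ * ω) • (T ζ * u)‖₊ : ℝ≥0∞))
          ((r : ℂ) * Complex.exp ((θ : ℂ) * Complex.I)) hζs
      exact mul_le_mul' hfac hSle
    have hLle : L ≤ ENNReal.ofReal ((x : ℝ)⁻¹) * Sl :=
      Filter.limsup_le_of_le (by isBoundedDefault) hevb
    have hxinveq : ENNReal.ofReal ((x : ℝ)⁻¹) = ((x⁻¹ : ℝ≥0) : ℝ≥0∞) := by
      rw [← ENNReal.ofReal_coe_nnreal, NNReal.coe_inv]
    calc (x : ℝ≥0∞) * L ≤ (x : ℝ≥0∞) * (ENNReal.ofReal ((x : ℝ)⁻¹) * Sl) :=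
        mul_le_mul' le_rfl hLle
    _ = ((x * x⁻¹ : ℝ≥0) : ℝ≥0∞) * Sl := by
        rw [hxinveq, ← mul_assoc, ← ENNReal.coe_mul]
    _ = Sl := by rw [mul_inv_cancel₀ hx0', ENNReal.coe_one, one_mul]
end
end

section
/- Let B be a nonzero commutative complex Banach algebra and let T : (0,∞) → B be norm-continuous with T(s+t) = T(s)T(t) for all s, t > 0, and suppose the closed linear span of { T(t) : t > 0 } equals B. Then for every character χ on B (i.e. every nonzero continuous multiplicative linear functional χ : B → ℂ): (a) χ(T(t)) ≠ 0 for all t > 0 and there is a unique λ_χ ∈ ℂ with χ(T(t)) = e^{λ_χ t} for all t > 0; (b) e^{t·Re(λ_χ)} ≤ ‖T(t)‖ for all t > 0; (c) for every complex measure ν on (0,∞) with ∫₀^∞ ‖T(t)‖ d|ν|(t) < +∞ one has χ( ∫₀^∞ T(t) dν(t) ) = ∫₀^∞ e^{λ_χ t} dν(t), where the integral of T is a Bochner integral in B. (Proposition 5.7) -/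
open Filter Topology Set MeasureTheory

open intervalIntegral in
lemma exists_exp_rep (f : ℝ → ℂ) (hc : ContinuousOn f (Set.Ioi 0))
    (hm : ∀ s t : ℝ, 0 < s → 0 < t → f (s + t) = f s * f t)
    (hne : ∀ t : ℝ, 0 < t → f t ≠ 0) :
    ∃ c : ℂ, ∀ t : ℝ, 0 < t → f t = Complex.exp (c * t) := by
  -- Step 1: f tends to 1 at 0+
  have h1 : Tendsto f (𝓝[>] (0:ℝ)) (𝓝 1) := by
    have hshift : Tendsto (fun t => f (t + 1)) (𝓝[>] (0:ℝ)) (𝓝 (f 1)) := by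
      have hct : ContinuousAt f 1 := hc.continuousAt (Ioi_mem_nhds one_pos)
      have h2 : Tendsto (fun t : ℝ => t + 1) (𝓝[>] (0:ℝ)) (𝓝 1) := by
        have := ((continuous_add_right (1:ℝ)).tendsto 0).mono_left
          (nhdsWithin_le_nhds (s := Set.Ioi (0:ℝ)))
        simpa using this
      exact hct.tendsto.comp h2
    have hdiv : Tendsto (fun t => f (t + 1) / f 1) (𝓝[>] (0:ℝ)) (𝓝 (f 1 / f 1)) :=
      hshift.div tendsto_const_nhds (hne 1 one_pos)
    rw [div_self (hne 1 one_pos)] at hdiv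
    refine hdiv.congr' ?_
    filter_upwards [self_mem_nhdsWithin] with t ht
    rw [hm t 1 ht one_pos, mul_div_assoc, div_self (hne 1 one_pos), mul_one]
  -- Step 2: choose a > 0 with ‖f t - 1‖ ≤ 1/2 on (0, 2a]
  obtain ⟨ε, hε, hεb⟩ : ∃ ε > 0, ∀ t ∈ Set.Ioc (0:ℝ) ε, ‖f t - 1‖ ≤ 1/2 := by
    have := Metric.tendsto_nhds.mp h1 (1/2) (by norm_num)
    rw [eventually_nhdsWithin_iff] at this
    obtain ⟨δ, hδ, hδb⟩ := Metric.eventually_nhds_iff.mp this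
    refine ⟨δ/2, by positivity, fun t ht => ?_⟩
    have := hδb (show dist t 0 < δ by
      rw [Real.dist_eq, sub_zero, abs_of_pos ht.1]; linarith [ht.2]) ht.1
    rw [dist_eq_norm] at this
    exact this.le
  obtain ⟨a, ha0, haε⟩ : ∃ a : ℝ, 0 < a ∧ 2*a = ε := ⟨ε/2, by positivity, by ring⟩
  have hintOn : ∀ p q : ℝ, 0 < p → p ≤ q → IntervalIntegrable f MeasureTheory.volume p q := by
    intro p q hp hpq
    apply ContinuousOn.intervalIntegrable
    apply hc.mono
    intro x hx
    rw [Set.uIcc_of_le hpq] at hx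
    exact lt_of_lt_of_le hp hx.1
  set I := ∫ t in a..(2*a), f t with hI
  have hIint : IntervalIntegrable f MeasureTheory.volume a (2*a) :=
    hintOn a (2*a) ha0 (by linarith)
  have hIne : I ≠ 0 := by
    have key : ‖I - (a : ℂ)‖ ≤ a / 2 := by
      have e1 : I - (a:ℂ) = ∫ t in a..(2*a), (f t - 1) := by
        rw [hI, intervalIntegral.integral_sub hIint intervalIntegrable_const,
          intervalIntegral.integral_const]
        norm_num
        ring_nf
      rw [e1]
      have := intervalIntegral.norm_integral_le_of_norm_le_const
        (C := 1/2) (f := fun t => f t - 1) (a := a) (b := 2*a) ?_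
      · calc _ ≤ 1/2 * |2*a - a| := this
          _ = a / 2 := by rw [abs_of_pos (by linarith)]; ring
      · intro x hx
        rw [Set.uIoc_of_le (by linarith : a ≤ 2*a)] at hx
        exact hεb x ⟨lt_trans ha0 hx.1, by linarith [hx.2]⟩
    intro h0
    rw [h0, zero_sub, norm_neg] at key
    have : ‖(a:ℂ)‖ = a := by simp [abs_of_pos ha0]
    rw [this] at key
    linarith
  -- Step 3: derivative of G
  set G := fun y => ∫ t in a..y, f t with hG
  have hGder : ∀ y : ℝ, a < y → HasDerivAt G (f y) y := by
    intro y hy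
    exact intervalIntegral.integral_hasDerivAt_right (hintOn a y ha0 hy.le)
      (hc.stronglyMeasurableAtFilter isOpen_Ioi y (lt_trans ha0 hy))
      (hc.continuousAt (Ioi_mem_nhds (lt_trans ha0 hy)))
  -- Step 4: f x * I = G (x + 2a) - G (x + a) for x > 0
  have hkey : ∀ x : ℝ, 0 < x → f x * I = G (x + 2*a) - G (x + a) := by
    intro x hx
    have hsub : G (x + 2*a) - G (x + a) = ∫ t in (x+a)..(x+2*a), f t := by
      rw [hG]
      have h1 := hintOn a (x + 2*a) ha0 (by linarith)
      have h2 := hintOn a (x + a) ha0 (by linarith)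
      simpa using intervalIntegral.integral_interval_sub_left h1 h2
    rw [hsub]
    have hcv : (∫ t in (x+a)..(x+2*a), f t) = ∫ s in a..(2*a), f (s + x) := by
      rw [intervalIntegral.integral_comp_add_right (fun t => f t) x]
      ring_nf
    rw [hcv]
    have : (∫ s in a..(2*a), f (s + x)) = ∫ s in a..(2*a), f x * f s := by
      apply intervalIntegral.integral_congr
      intro s hs
      rw [Set.uIcc_of_le (by linarith : a ≤ 2*a)] at hs
      show f (s + x) = f x * f s
      rw [add_comm s x, hm x s hx (lt_of_lt_of_le ha0 hs.1)]
    rw [this, intervalIntegral.integral_const_mul]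
  -- Step 5: f has derivative c₀ * f x at each x > 0
  set c : ℂ := (f (2*a) - f a) / I with hcdef
  have hfder : ∀ x : ℝ, 0 < x → HasDerivAt f (c * f x) x := by
    intro x hx
    have hd2 : HasDerivAt (fun x : ℝ => G (x + 2*a)) (f (x + 2*a)) x :=
      ((hGder (x + 2*a) (by linarith)).comp_add_const x (2*a))
    have hd1 : HasDerivAt (fun x : ℝ => G (x + a)) (f (x + a)) x :=
      ((hGder (x + a) (by linarith)).comp_add_const x a)
    have hd : HasDerivAt (fun x : ℝ => (G (x + 2*a) - G (x + a)) / I)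
        ((f (x + 2*a) - f (x + a)) / I) x := (hd2.sub hd1).div_const I
    have heq : f =ᶠ[𝓝 x] fun x => (G (x + 2*a) - G (x + a)) / I := by
      filter_upwards [Ioi_mem_nhds hx] with y hy
      rw [eq_div_iff hIne, ← hkey y hy]
    have := hd.congr_of_eventuallyEq heq
    convert this using 1
    case e'_4 => rfl
    rw [hm x (2*a) hx (by linarith), hm x a hx ha0] at *
    rw [hcdef]
    field_simp
  -- Step 6: h := exp(-(c x)) * f x is locally constant
  have hconst : ∀ x y : ℝ, 0 < x → x ≤ y →
      Complex.exp (-(c * y)) * f y = Complex.exp (-(c * x)) * f x := by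
    intro x y hx hxy
    set h := fun z : ℝ => Complex.exp (-(c * z)) * f z with hh
    have hder : ∀ z ∈ Set.Ico x y, HasDerivWithinAt h 0 (Set.Ici z) z := by
      intro z hz
      have hz0 : 0 < z := lt_of_lt_of_le hx hz.1
      have he : HasDerivAt (fun z : ℝ => Complex.exp (-(c * z))) (-c * Complex.exp (-(c * z))) z := by
        have : HasDerivAt (fun z : ℝ => -(c * z)) (-c) z := by
          simpa [Pi.neg_def] using ((hasDerivAt_id z).ofReal_comp.const_mul c).neg
        simpa [mul_comm] using this.cexp
      have := he.mul (hfder z hz0)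
      have h0 : -c * Complex.exp (-(c * z)) * f z + Complex.exp (-(c * z)) * (c * f z) = 0 := by
        ring
      rw [h0] at this
      exact this.hasDerivWithinAt
    have hcont : ContinuousOn h (Set.Icc x y) := by
      apply ContinuousOn.mul
      · exact (Complex.continuous_exp.comp
          ((continuous_const.mul Complex.continuous_ofReal).neg)).continuousOn
      · exact (hc.mono (fun z hz => lt_of_lt_of_le hx hz.1))
    have := constant_of_has_deriv_right_zero hcont hder y (Set.right_mem_Icc.mpr hxy)
    exact this
  -- Step 7: conclude
  refine ⟨c, fun t ht => ?_⟩
  have hK : ∀ t : ℝ, 0 < t → Complex.exp (-(c * t)) * f t = Complex.exp (-(c * 1)) * f 1 := by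
    intro t ht
    rcases le_total t 1 with h | h
    · exact (hconst t 1 ht h).symm
    · exact hconst 1 t one_pos h
  set K := Complex.exp (-(c * 1)) * f 1 with hKdef
  have hKval : ∀ t : ℝ, 0 < t → f t = K * Complex.exp (c * t) := by
    intro t ht
    have h' := hK t ht
    rw [← h', mul_comm (Complex.exp (-(c * ↑t))) (f t), mul_assoc, ← Complex.exp_add]
    simp
  have hexp : Complex.exp (c * 2) = Complex.exp (c * 1) * Complex.exp (c * 1) := by
    rw [← Complex.exp_add]; ring_nf
  have hK2 : K * Complex.exp (c * 2) = (K * K) * Complex.exp (c * 2) := by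
    have h21 : f 2 = f 1 * f 1 := by
      have := hm 1 1 one_pos one_pos
      norm_num at this
      exact this
    rw [hKval 2 (by norm_num), hKval 1 one_pos] at h21
    push_cast at h21
    linear_combination h21 - K*K*hexp
  have hK1 : K = K * K := mul_right_cancel₀ (Complex.exp_ne_zero _) hK2
  have hKne : K ≠ 0 := by
    intro h0
    have h1 := hKval 1 one_pos
    rw [h0, zero_mul] at h1
    exact hne 1 one_pos h1
  have hKone : K = 1 := by
    have := mul_left_cancel₀ hKne (show K * 1 = K * K by rw [mul_one, ← hK1])
    exact this.symm
  rw [hKval t ht, hKone, one_mul]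


/-- Proposition 5.7.  A complex measure `ν` on `(0,∞)` is encoded as a
(positive) measure `μ` together with a density `g : ℝ → ℂ` integrable on `(0,∞)`; the total
variation integral `∫ h d|ν|` is then `∫ h(t) ‖g t‖ dμ(t)`. -/
theorem statement5
    {B : Type*} [NonUnitalNormedCommRing B] [NormedSpace ℂ B]
    [IsScalarTower ℂ B B] [SMulCommClass ℂ B B] [CompleteSpace B] [Nontrivial B]
    (T : ℝ → B)
    (hcont : ContinuousOn T (Set.Ioi 0))
    (hsg : ∀ s t : ℝ, 0 < s → 0 < t → T (s + t) = T s * T t)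
    (hspan : (Submodule.span ℂ (T '' Set.Ioi 0)).topologicalClosure = ⊤)
    (χ : B →L[ℂ] ℂ) (hχmul : ∀ u v : B, χ (u * v) = χ u * χ v) (hχ : χ ≠ 0) :
    ∃ lam : ℂ,
      -- (a) existence and uniqueness of `λ_χ`, and nonvanishing of `χ(T(t))`
      (∀ t : ℝ, 0 < t → χ (T t) = Complex.exp (lam * t)) ∧
      (∀ lam' : ℂ, (∀ t : ℝ, 0 < t → χ (T t) = Complex.exp (lam' * t)) → lam' = lam) ∧
      (∀ t : ℝ, 0 < t → χ (T t) ≠ 0) ∧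
      -- (b)
      (∀ t : ℝ, 0 < t → Real.exp (t * lam.re) ≤ ‖T t‖) ∧
      -- (c)
      (∀ (μ : MeasureTheory.Measure ℝ) (g : ℝ → ℂ),
        MeasureTheory.Integrable g (μ.restrict (Set.Ioi 0)) →
        MeasureTheory.Integrable (fun t : ℝ => ‖g t‖ * ‖T t‖) (μ.restrict (Set.Ioi 0)) →
        χ (∫ t in Set.Ioi (0 : ℝ), g t • T t ∂μ)
          = ∫ t in Set.Ioi (0 : ℝ), g t * Complex.exp (lam * t) ∂μ) := by
  set f : ℝ → ℂ := fun t => χ (T t) with hf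
  have hfc : ContinuousOn f (Set.Ioi 0) := χ.continuous.comp_continuousOn hcont
  have hfm : ∀ s t : ℝ, 0 < s → 0 < t → f (s + t) = f s * f t := by
    intro s t hs ht
    rw [hf]; simp only [hsg s t hs ht, hχmul]
  -- nonvanishing at some point
  have hex : ∃ t₀ : ℝ, 0 < t₀ ∧ f t₀ ≠ 0 := by
    by_contra h
    push_neg at h
    have hle : Submodule.span ℂ (T '' Set.Ioi 0) ≤ LinearMap.ker (χ : B →ₗ[ℂ] ℂ) := by
      rw [Submodule.span_le]
      rintro x ⟨t, ht, rfl⟩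
      exact h t ht
    have hcl : (Submodule.span ℂ (T '' Set.Ioi 0)).topologicalClosure ≤ LinearMap.ker (χ : B →ₗ[ℂ] ℂ) :=
      Submodule.topologicalClosure_minimal _ hle (ContinuousLinearMap.isClosed_ker χ)
    rw [hspan] at hcl
    apply hχ
    ext x
    exact hcl (Submodule.mem_top : x ∈ ⊤)
  obtain ⟨t₀, ht₀, hft₀⟩ := hex
  -- powers
  have hpowgen : ∀ (u : ℝ), 0 < u → ∀ n : ℕ, f ((n : ℝ) * u + u) = (f u) ^ (n + 1) := by
    intro u hu n
    induction n with
    | zero => simp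
    | succ k ih =>
      have h1 : ((k + 1 : ℕ) : ℝ) * u + u = ((k : ℝ) * u + u) + u := by push_cast; ring
      rw [h1, hfm _ _ (by positivity) hu, ih]
      ring
  -- nonvanishing everywhere
  have hne : ∀ t : ℝ, 0 < t → f t ≠ 0 := by
    intro t ht
    obtain ⟨n, hn⟩ := exists_nat_gt (t / t₀)
    have hnt : t < (n : ℝ) * t₀ + t₀ := by
      have h1 : t / t₀ < (n : ℝ) := hn
      have h2 : t < (n : ℝ) * t₀ := by
        calc t = (t / t₀) * t₀ := by field_simp
          _ < (n : ℝ) * t₀ := mul_lt_mul_of_pos_right h1 ht₀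
      linarith
    have hsplit : f ((n : ℝ) * t₀ + t₀) = f t * f ((n : ℝ) * t₀ + t₀ - t) := by
      have h1 : (n : ℝ) * t₀ + t₀ = t + ((n : ℝ) * t₀ + t₀ - t) := by ring
      rw [h1, hfm t _ ht (by linarith)]
      congr 2
      ring
    intro h0
    have h2 := hpowgen t₀ ht₀ n
    rw [hsplit, h0, zero_mul] at h2
    exact pow_ne_zero _ hft₀ h2.symm
  obtain ⟨lam, hlam⟩ := exists_exp_rep f hfc hfm hne
  refine ⟨lam, hlam, ?_, fun t ht => by
    rw [show χ (T t) = f t from rfl, hlam t ht]; exact Complex.exp_ne_zero _, ?_, ?_⟩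
  · -- uniqueness
    intro lam' hlam'
    by_contra hd
    set d := lam' - lam with hdd
    have hdne : d ≠ 0 := sub_ne_zero.mpr hd
    have heq1 : ∀ t : ℝ, 0 < t → Complex.exp (d * t) = 1 := by
      intro t ht
      have hee : Complex.exp (lam' * t) = Complex.exp (lam * t) := by
        rw [← hlam' t ht]
        exact hlam t ht
      rw [hdd, sub_mul, Complex.exp_sub, hee, div_self (Complex.exp_ne_zero _)]
    have h1 : HasDerivAt (fun t : ℝ => Complex.exp (d * t)) (Complex.exp (d * 1) * d) 1 := by
      have h : HasDerivAt (fun t : ℝ => d * (t : ℂ)) d 1 := by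
        simpa using ((hasDerivAt_id (1:ℝ)).ofReal_comp.const_mul d)
      simpa [mul_comm] using h.cexp
    have h2 : HasDerivAt (fun t : ℝ => Complex.exp (d * t)) 0 1 := by
      have hev : (fun t : ℝ => Complex.exp (d * t)) =ᶠ[nhds (1:ℝ)] fun _ => 1 := by
        filter_upwards [Ioi_mem_nhds one_pos] with t ht
        exact heq1 t ht
      exact (hasDerivAt_const (1:ℝ) (1:ℂ)).congr_of_eventuallyEq hev
    have h3 := h1.unique h2
    rcases mul_eq_zero.mp h3 with h | h
    · exact absurd h (Complex.exp_ne_zero _)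
    · exact hdne h
  · -- (b)
    intro t ht
    have hTpow : ∀ n : ℕ, ‖T ((n : ℝ) * t + t)‖ ≤ ‖T t‖ ^ (n + 1) := by
      intro n
      induction n with
      | zero => simp
      | succ k ih =>
        have h1 : ((k + 1 : ℕ) : ℝ) * t + t = ((k : ℝ) * t + t) + t := by push_cast; ring
        rw [h1, hsg _ _ (by positivity) ht, pow_succ]
        exact le_trans (norm_mul_le _ _) (mul_le_mul_of_nonneg_right ih (norm_nonneg _))
    have hxC : ∀ n : ℕ, ‖f t‖ ^ (n + 1) ≤ ‖χ‖ * ‖T t‖ ^ (n + 1) := by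
      intro n
      calc ‖f t‖ ^ (n + 1) = ‖f ((n : ℝ) * t + t)‖ := by
            rw [hpowgen t ht n, norm_pow]
        _ ≤ ‖χ‖ * ‖T ((n : ℝ) * t + t)‖ := χ.le_opNorm _
        _ ≤ ‖χ‖ * ‖T t‖ ^ (n + 1) :=
            mul_le_mul_of_nonneg_left (hTpow n) (norm_nonneg _)
    have hxle : ‖f t‖ ≤ ‖T t‖ := by
      by_contra hlt
      push_neg at hlt
      have hx0 : 0 < ‖f t‖ := lt_of_le_of_lt (norm_nonneg _) hlt
      have hy0 : 0 < ‖T t‖ := by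
        by_contra hy
        push_neg at hy
        have hTt0 : ‖T t‖ = 0 := le_antisymm hy (norm_nonneg _)
        have h5 := hxC 0
        rw [pow_one, pow_one, hTt0, mul_zero] at h5
        linarith
      have hr : 1 < ‖f t‖ / ‖T t‖ := (one_lt_div hy0).mpr hlt
      obtain ⟨n, hn⟩ := pow_unbounded_of_one_lt ‖χ‖ hr
      have h1 : (‖f t‖ / ‖T t‖) ^ (n + 1) ≤ ‖χ‖ := by
        rw [div_pow, div_le_iff₀ (by positivity)]
        exact hxC n
      have h2 : (‖f t‖ / ‖T t‖) ^ n ≤ (‖f t‖ / ‖T t‖) ^ (n + 1) :=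
        pow_le_pow_right₀ (le_of_lt hr) (Nat.le_succ n)
      linarith
    calc Real.exp (t * lam.re) = ‖Complex.exp (lam * t)‖ := by
          rw [Complex.norm_exp]
          norm_num [mul_comm]
      _ = ‖f t‖ := by rw [hlam t ht]
      _ ≤ ‖T t‖ := hxle
  · -- (c)
    intro μ g hg hgT
    have hTmeas : AEStronglyMeasurable T (μ.restrict (Set.Ioi 0)) :=
      hcont.aestronglyMeasurable measurableSet_Ioi
    have hFmeas : AEStronglyMeasurable (fun t => g t • T t) (μ.restrict (Set.Ioi 0)) :=
      hg.aestronglyMeasurable.smul hTmeas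
    have hFint : Integrable (fun t => g t • T t) (μ.restrict (Set.Ioi 0)) := by
      refine hgT.mono' hFmeas ?_
      filter_upwards with t
      rw [norm_smul]
    rw [← ContinuousLinearMap.integral_comp_comm χ hFint]
    apply MeasureTheory.setIntegral_congr_ae measurableSet_Ioi
    filter_upwards with t ht
    rw [ContinuousLinearMap.map_smul, smul_eq_mul, ← hlam t ht]
end

section
/- Let α, β ∈ ℝᵏ with αⱼ ≤ βⱼ < αⱼ + π for all j, let X be a complex Banach space, and let T : S̄_{α,β} → B(X) satisfy T(0) = Id, T(ζ)∘T(ζ') = T(ζ+ζ') for all ζ, ζ' ∈ S̄_{α,β}, and ζ ↦ T(ζ)x continuous on S̄_{α,β} for each x ∈ X. Let z ∈ ℂᵏ be such that sup_{ζ ∈ S̄_{α,β}} |e^{z·ζ}| ‖T(ζ)‖ < +∞. Let ν₁, ν₂ be complex measures of bounded variation on S̄_{α,β} and let ν₁∗ν₂ denote their convolution (the pushforward of ν₁ ⊗ ν₂ under addition (ζ, ζ') ↦ ζ + ζ'). Then for every x ∈ X, ∫_{S̄_{α,β}} e^{z·ζ} T(ζ)x d(ν₁∗ν₂)(ζ)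 = ∫_{S̄_{α,β}} e^{z·ζ} T(ζ) [ ∫_{S̄_{α,β}} e^{z·ζ'} T(ζ')x dν₂(ζ') ] dν₁(ζ), all integrals being Bochner integrals in X. (Multiplicativity under convolution, from Theorem 8.6(vii)) -/
open Filter Topology Set MeasureTheory

noncomputable section

lemma sector_calc (r θ c : ℝ) :
    (r : ℂ) * Complex.exp ((θ:ℂ) * Complex.I) * Complex.exp (-(c:ℂ) * Complex.I)
      = (r : ℂ) * Complex.exp (((θ - c : ℝ):ℂ) * Complex.I) := by
  rw [mul_assoc, ← Complex.exp_add]; push_cast; ring_nf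

lemma sector_im (r θ c : ℝ) :
    ((r : ℂ) * Complex.exp ((θ:ℂ) * Complex.I) * Complex.exp (-(c:ℂ) * Complex.I)).im
      = r * Real.sin (θ - c) := by
  rw [sector_calc]
  simp only [Complex.mul_im, Complex.ofReal_re, Complex.ofReal_im,
    Complex.exp_ofReal_mul_I_re, Complex.exp_ofReal_mul_I_im]
  ring

lemma sector_re (r θ c : ℝ) :
    ((r : ℂ) * Complex.exp ((θ:ℂ) * Complex.I) * Complex.exp (-(c:ℂ) * Complex.I)).re
      = r * Real.cos (θ - c) := by
  rw [sector_calc]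
  simp only [Complex.mul_re, Complex.ofReal_re, Complex.ofReal_im,
    Complex.exp_ofReal_mul_I_re, Complex.exp_ofReal_mul_I_im]
  ring

lemma sector_mem_iff {a b : ℝ} (hab : a ≤ b) (hπ : b < a + Real.pi) (w : ℂ) :
    w ∈ closedSector a b ↔
      0 ≤ (w * Complex.exp (-(a:ℂ) * Complex.I)).im ∧
      (w * Complex.exp (-(b:ℂ) * Complex.I)).im ≤ 0 ∧
      0 ≤ (w * Complex.exp (-(((a+b)/2 : ℝ):ℂ) * Complex.I)).re := by
  have hpi := Real.pi_pos
  constructor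
  · rintro ⟨r, hr, θ, ⟨hθ1, hθ2⟩, rfl⟩
    rw [sector_im, sector_im, sector_re]
    refine ⟨mul_nonneg hr (Real.sin_nonneg_of_nonneg_of_le_pi (by linarith) (by linarith)),
      ?_, mul_nonneg hr (Real.cos_nonneg_of_mem_Icc ⟨by linarith, by linarith⟩)⟩
    have : Real.sin (θ - b) ≤ 0 := by
      rw [show θ - b = -(b - θ) by ring, Real.sin_neg]
      exact neg_nonpos_of_nonneg (Real.sin_nonneg_of_nonneg_of_le_pi (by linarith) (by linarith))
    exact mul_nonpos_of_nonneg_of_nonpos hr this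
  · rintro ⟨h1, h2, h3⟩
    by_cases hw : w = 0
    · exact ⟨0, le_refl 0, a, ⟨le_refl a, hab⟩, by simp [hw]⟩
    set m := (a + b) / 2 with hm
    set φ := Complex.arg w with hφ
    set k : ℤ := ⌊(m + Real.pi - φ) / (2 * Real.pi)⌋ with hk
    set θ := φ + 2 * Real.pi * k with hθdef
    have hr : (0:ℝ) < ‖w‖ := by
      simpa [norm_pos_iff] using hw
    have hexp : Complex.exp ((θ:ℂ) * Complex.I) = Complex.exp ((φ:ℂ) * Complex.I) := by
      rw [hθdef]
      push_cast
      rw [add_mul, Complex.exp_add,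
        show ((2:ℂ) * Real.pi * k * Complex.I) = (k : ℤ) * (2 * Real.pi * Complex.I) by
          push_cast; ring,
        Complex.exp_int_mul, Complex.exp_two_pi_mul_I, one_zpow, mul_one]
    have hwe : w = (‖w‖ : ℂ) * Complex.exp ((θ:ℂ) * Complex.I) := by
      rw [hexp]; exact (Complex.norm_mul_exp_arg_mul_I w).symm
    have h2π : (0:ℝ) < 2 * Real.pi := by linarith
    have hub : θ - m ≤ Real.pi := by
      have h1' : (k:ℝ) ≤ (m + Real.pi - φ) / (2 * Real.pi) := Int.floor_le _
      have := (le_div_iff₀ h2π).mp h1'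
      simp only [hθdef]; linarith
    have hlb : -Real.pi < θ - m := by
      have h1' : (m + Real.pi - φ) / (2 * Real.pi) < (k:ℝ) + 1 := Int.lt_floor_add_one _
      have := (div_lt_iff₀ h2π).mp h1'
      simp only [hθdef]; linarith
    -- rewrite conditions
    rw [hwe, sector_im] at h1
    rw [hwe, sector_im] at h2
    rw [hwe, sector_re] at h3
    have hsa : 0 ≤ Real.sin (θ - a) := nonneg_of_mul_nonneg_right h1 hr
    have hsb : Real.sin (θ - b) ≤ 0 := nonpos_of_mul_nonpos_right h2 hr
    have hcm : 0 ≤ Real.cos (θ - m) := nonneg_of_mul_nonneg_right h3 hr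
    have hba2 : 0 ≤ (b - a) / 2 := by linarith
    have hba2' : (b - a) / 2 < Real.pi / 2 := by linarith
    have hma : m - a = (b - a) / 2 := by rw [hm]; ring
    have hbm : b - m = (b - a) / 2 := by rw [hm]; ring
    have hc2 : θ - m ≤ Real.pi / 2 := by
      by_contra h
      push_neg at h
      exact absurd hcm (not_le.mpr (Real.cos_neg_of_pi_div_two_lt_of_lt h (by linarith)))
    have hc1 : -(Real.pi / 2) ≤ θ - m := by
      by_contra h
      push_neg at h
      have : Real.cos (m - θ) < 0 :=
        Real.cos_neg_of_pi_div_two_lt_of_lt (by linarith) (by linarith)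
      rw [show m - θ = -(θ - m) by ring, Real.cos_neg] at this
      linarith
    have hθa : a ≤ θ := by
      by_contra h
      push_neg at h
      have : Real.sin (θ - a) < 0 :=
        Real.sin_neg_of_neg_of_neg_pi_lt (by linarith) (by linarith)
      linarith
    have hθb : θ ≤ b := by
      by_contra h
      push_neg at h
      have : 0 < Real.sin (θ - b) :=
        Real.sin_pos_of_pos_of_lt_pi (by linarith) (by linarith)
      linarith
    exact ⟨‖w‖, hr.le, θ, ⟨hθa, hθb⟩, hwe⟩

lemma sector_add {a b : ℝ} (hab : a ≤ b) (hπ : b < a + Real.pi) {w₁ w₂ : ℂ}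
    (h1 : w₁ ∈ closedSector a b) (h2 : w₂ ∈ closedSector a b) :
    w₁ + w₂ ∈ closedSector a b := by
  rw [sector_mem_iff hab hπ] at h1 h2 ⊢
  simp only [add_mul, Complex.add_im, Complex.add_re]
  exact ⟨add_nonneg h1.1 h2.1, add_nonpos h1.2.1 h2.2.1, add_nonneg h1.2.2 h2.2.2⟩

lemma sector_isClosed {a b : ℝ} (hab : a ≤ b) (hπ : b < a + Real.pi) :
    IsClosed (closedSector a b) := by
  have hc : ∀ c : ℂ, Continuous fun z : ℂ => z * c := fun c => continuous_id.mul continuous_const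
  have : closedSector a b =
      {z : ℂ | 0 ≤ (z * Complex.exp (-(a:ℂ) * Complex.I)).im} ∩
      ({z : ℂ | (z * Complex.exp (-(b:ℂ) * Complex.I)).im ≤ 0} ∩
       {z : ℂ | 0 ≤ (z * Complex.exp (-(((a+b)/2 : ℝ):ℂ) * Complex.I)).re}) := by
    ext w; rw [sector_mem_iff hab hπ]; rfl
  rw [this]
  exact (isClosed_le continuous_const (Complex.continuous_im.comp (hc _))).inter
    ((isClosed_le (Complex.continuous_im.comp (hc _)) continuous_const).inter
      (isClosed_le continuous_const (Complex.continuous_re.comp (hc _))))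


/-- multiplicativity under convolution, from Theorem 8.6(vii).
A complex measure `νᵢ` of bounded variation on `S̄_{α,β}` is encoded as a finite measure `μᵢ`
concentrated on `S̄_{α,β}` with an integrable density `gᵢ : ℂᵏ → ℂ`; the convolution `ν₁∗ν₂`
(the pushforward of `ν₁ ⊗ ν₂` under addition) then integrates `h` to
`∬ h(ζ+ζ') g₁(ζ) g₂(ζ') dμ₁ dμ₂`. -/
theorem statement10
    {X : Type*} [NormedAddCommGroup X] [NormedSpace ℂ X] [CompleteSpace X]
    {k : ℕ}
    (α β : Fin k → ℝ) (hαβ : ∀ j, α j ≤ β j) (hπ : ∀ j, β j < α j + Real.pi)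
    (S : Set (Fin k → ℂ)) (hS : S = {ζ | ∀ j, ζ j ∈ closedSector (α j) (β j)})
    (T : (Fin k → ℂ) → X →L[ℂ] X)
    (hT0 : T 0 = ContinuousLinearMap.id ℂ X)
    (hsg : ∀ ζ ∈ S, ∀ ζ' ∈ S, (T ζ).comp (T ζ') = T (ζ + ζ'))
    (hcont : ∀ x : X, ContinuousOn (fun ζ => T ζ x) S)
    (z : Fin k → ℂ)
    (hbound : ∃ C : ℝ, ∀ ζ ∈ S, ‖Complex.exp (∑ j, z j * ζ j)‖ * ‖T ζ‖ ≤ C)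
    (μ₁ μ₂ : MeasureTheory.Measure (Fin k → ℂ))
    [MeasureTheory.IsFiniteMeasure μ₁] [MeasureTheory.IsFiniteMeasure μ₂]
    (g₁ g₂ : (Fin k → ℂ) → ℂ)
    (hg₁ : MeasureTheory.Integrable g₁ μ₁) (hg₂ : MeasureTheory.Integrable g₂ μ₂)
    (hs₁ : μ₁ Sᶜ = 0) (hs₂ : μ₂ Sᶜ = 0)
    (x : X) :
    ∫ p : (Fin k → ℂ) × (Fin k → ℂ),
        (Complex.exp (∑ j, z j * (p.1 j + p.2 j)) * (g₁ p.1 * g₂ p.2)) • T (p.1 + p.2) x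
        ∂(μ₁.prod μ₂)
      = ∫ ζ, (Complex.exp (∑ j, z j * ζ j) * g₁ ζ) •
          T ζ (∫ ζ', (Complex.exp (∑ j, z j * ζ' j) * g₂ ζ') • T ζ' x ∂μ₂) ∂μ₁ := by
  obtain ⟨C, hC⟩ := hbound
  set E : (Fin k → ℂ) → ℂ := fun ζ => Complex.exp (∑ j, z j * ζ j) with hE
  -- basic facts about S
  have hSc : IsClosed S := by
    rw [hS]
    have : {ζ : Fin k → ℂ | ∀ j, ζ j ∈ closedSector (α j) (β j)} =
        ⋂ j, (fun ζ : Fin k → ℂ => ζ j) ⁻¹' closedSector (α j) (β j) := by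
      ext ζ; simp
    rw [this]
    exact isClosed_iInter fun j => (sector_isClosed (hαβ j) (hπ j)).preimage (continuous_apply j)
  have hSm : MeasurableSet S := hSc.measurableSet
  have hSadd : ∀ ζ ∈ S, ∀ ζ' ∈ S, ζ + ζ' ∈ S := by
    intro ζ hζ ζ' hζ'
    rw [hS] at hζ hζ' ⊢
    exact fun j => sector_add (hαβ j) (hπ j) (hζ j) (hζ' j)
  have hEcont : Continuous E :=
    Complex.continuous_exp.comp (continuous_finset_sum _ fun j _ =>
      continuous_const.mul (continuous_apply j))
  have hEadd : ∀ ζ ζ' : Fin k → ℂ,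
      Complex.exp (∑ j, z j * (ζ j + ζ' j)) = E ζ * E ζ' := by
    intro ζ ζ'
    rw [hE, ← Complex.exp_add]
    congr 1
    rw [← Finset.sum_add_distrib]
    exact Finset.sum_congr rfl fun j _ => by ring
  -- a.e. membership
  have hae₁ : ∀ᵐ ζ ∂μ₁, ζ ∈ S := by
    rw [MeasureTheory.ae_iff]; simpa [Set.compl_def] using hs₁
  have hae₂ : ∀ᵐ ζ ∂μ₂, ζ ∈ S := by
    rw [MeasureTheory.ae_iff]; simpa [Set.compl_def] using hs₂
  -- measurability of T · x against any measure vanishing outside S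
  have hTm : ∀ (μ : Measure (Fin k → ℂ)) (v : X), μ Sᶜ = 0 →
      AEStronglyMeasurable (fun ζ => T ζ v) μ := by
    intro μ v hμ
    have := (hcont v).aestronglyMeasurable (μ := μ) hSm
    rwa [Measure.restrict_eq_self_of_ae_mem
      (by rw [MeasureTheory.ae_iff]; simpa [Set.compl_def] using hμ)] at this
  -- integrability of the inner function
  have hinner : ∀ (μ : Measure (Fin k → ℂ)) (g : (Fin k → ℂ) → ℂ) (v : X)
      [IsFiniteMeasure μ], μ Sᶜ = 0 → Integrable g μ →
      Integrable (fun ζ => (E ζ * g ζ) • T ζ v) μ := by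
    intro μ g v _ hμ hg
    have haem : ∀ᵐ ζ ∂μ, ζ ∈ S := by
      rw [MeasureTheory.ae_iff]; simpa [Set.compl_def] using hμ
    refine Integrable.mono' ((hg.norm.const_mul (C * ‖v‖)))
      ((hEcont.aestronglyMeasurable.mul hg.1).smul (hTm μ v hμ)) ?_
    filter_upwards [haem] with ζ hζ
    have h1 : ‖(E ζ * g ζ) • T ζ v‖ = ‖E ζ‖ * ‖g ζ‖ * ‖T ζ v‖ := by
      rw [norm_smul, norm_mul]
    rw [h1]
    have h2 : ‖T ζ v‖ ≤ ‖T ζ‖ * ‖v‖ := (T ζ).le_opNorm v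
    have h3 : ‖E ζ‖ * ‖T ζ‖ ≤ C := hC ζ hζ
    calc ‖E ζ‖ * ‖g ζ‖ * ‖T ζ v‖
        ≤ ‖E ζ‖ * ‖g ζ‖ * (‖T ζ‖ * ‖v‖) :=
          mul_le_mul_of_nonneg_left h2 (by positivity)
      _ = ‖E ζ‖ * ‖T ζ‖ * (‖g ζ‖ * ‖v‖) := by ring
      _ ≤ C * (‖g ζ‖ * ‖v‖) := mul_le_mul_of_nonneg_right h3 (by positivity)
      _ = C * ‖v‖ * ‖g ζ‖ := by ring
  have h2int : Integrable (fun ζ' => (E ζ' * g₂ ζ') • T ζ' x) μ₂ := hinner μ₂ g₂ x hs₂ hg₂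
  -- product measure facts
  have haddm : Measurable (fun p : (Fin k → ℂ) × (Fin k → ℂ) => p.1 + p.2) :=
    (continuous_fst.add continuous_snd).measurable
  have hprodSS : (μ₁.prod μ₂) ((S ×ˢ S)ᶜ) = 0 := by
    have hsub : (S ×ˢ S)ᶜ ⊆ (Sᶜ ×ˢ univ) ∪ (univ ×ˢ Sᶜ) := by
      intro p hp
      simp only [Set.mem_compl_iff, Set.mem_prod, Set.mem_union, Set.mem_univ,
        and_true, true_and] at hp ⊢
      tauto
    refine measure_mono_null hsub (measure_union_null ?_ ?_)
    · rw [Measure.prod_prod, hs₁, zero_mul]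
    · rw [Measure.prod_prod, hs₂, mul_zero]
  have haeP : ∀ᵐ p ∂(μ₁.prod μ₂), p.1 ∈ S ∧ p.2 ∈ S := by
    rw [MeasureTheory.ae_iff]
    refine measure_mono_null ?_ hprodSS
    intro p hp
    simpa [Set.mem_prod] using hp
  -- measurability of p ↦ T (p.1 + p.2) x
  have hmapnull : (Measure.map (fun p : (Fin k → ℂ) × (Fin k → ℂ) => p.1 + p.2)
      (μ₁.prod μ₂)) Sᶜ = 0 := by
    rw [Measure.map_apply haddm hSm.compl]
    refine measure_mono_null ?_ hprodSS
    intro p hp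
    simp only [Set.mem_preimage, Set.mem_compl_iff, Set.mem_prod] at hp ⊢
    intro h
    exact hp (hSadd _ h.1 _ h.2)
  have hTP : AEStronglyMeasurable (fun p : (Fin k → ℂ) × (Fin k → ℂ) => T (p.1 + p.2) x)
      (μ₁.prod μ₂) :=
    (hTm _ x hmapnull).comp_measurable haddm
  -- integrability of the product integrand
  have hintP : Integrable (fun p : (Fin k → ℂ) × (Fin k → ℂ) =>
      (Complex.exp (∑ j, z j * (p.1 j + p.2 j)) * (g₁ p.1 * g₂ p.2)) • T (p.1 + p.2) x)
      (μ₁.prod μ₂) := by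
    have hmeas : AEStronglyMeasurable (fun p : (Fin k → ℂ) × (Fin k → ℂ) =>
        (Complex.exp (∑ j, z j * (p.1 j + p.2 j)) * (g₁ p.1 * g₂ p.2)) • T (p.1 + p.2) x)
        (μ₁.prod μ₂) := by
      have hexp : Continuous (fun p : (Fin k → ℂ) × (Fin k → ℂ) =>
          Complex.exp (∑ j, z j * (p.1 j + p.2 j))) := by
        exact Complex.continuous_exp.comp (continuous_finset_sum _ fun j _ =>
          continuous_const.mul ((continuous_apply j).comp continuous_fst |>.add
            ((continuous_apply j).comp continuous_snd)))
      exact (hexp.aestronglyMeasurable.mul ((hg₁.1.comp_fst).mul (hg₂.1.comp_snd))).smul hTP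
    refine Integrable.mono' (((hg₁.norm.mul_prod hg₂.norm).const_mul (C * ‖x‖))) hmeas ?_
    filter_upwards [haeP] with p hp
    have hmem : p.1 + p.2 ∈ S := hSadd _ hp.1 _ hp.2
    have h1 : ‖(Complex.exp (∑ j, z j * (p.1 j + p.2 j)) * (g₁ p.1 * g₂ p.2)) • T (p.1 + p.2) x‖
        = ‖E (p.1 + p.2)‖ * (‖g₁ p.1‖ * ‖g₂ p.2‖) * ‖T (p.1 + p.2) x‖ := by
      rw [norm_smul, norm_mul, norm_mul]
      rfl
    rw [h1]
    have h2 : ‖T (p.1 + p.2) x‖ ≤ ‖T (p.1 + p.2)‖ * ‖x‖ := (T _).le_opNorm x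
    have h3 : ‖E (p.1 + p.2)‖ * ‖T (p.1 + p.2)‖ ≤ C := hC _ hmem
    calc ‖E (p.1 + p.2)‖ * (‖g₁ p.1‖ * ‖g₂ p.2‖) * ‖T (p.1 + p.2) x‖
        ≤ ‖E (p.1 + p.2)‖ * (‖g₁ p.1‖ * ‖g₂ p.2‖) * (‖T (p.1 + p.2)‖ * ‖x‖) :=
          mul_le_mul_of_nonneg_left h2 (by positivity)
      _ = ‖E (p.1 + p.2)‖ * ‖T (p.1 + p.2)‖ * (‖g₁ p.1‖ * ‖g₂ p.2‖ * ‖x‖) := by ring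
      _ ≤ C * (‖g₁ p.1‖ * ‖g₂ p.2‖ * ‖x‖) := mul_le_mul_of_nonneg_right h3 (by positivity)
      _ = C * ‖x‖ * (‖g₁ p.1‖ * ‖g₂ p.2‖) := by ring
  -- Fubini
  rw [MeasureTheory.integral_prod _ hintP]
  refine integral_congr_ae ?_
  filter_upwards [hae₁] with ζ hζ
  have hstep : ∀ᵐ ζ' ∂μ₂,
      (Complex.exp (∑ j, z j * (ζ j + ζ' j)) * (g₁ ζ * g₂ ζ')) • T (ζ + ζ') x
        = (E ζ * g₁ ζ) • ((E ζ' * g₂ ζ') • T ζ (T ζ' x)) := by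
    filter_upwards [hae₂] with ζ' hζ'
    have hTT : T ζ (T ζ' x) = T (ζ + ζ') x := by
      have := DFunLike.congr_fun (hsg ζ hζ ζ' hζ') x
      simpa using this
    rw [hEadd, ← hTT, smul_smul]
    congr 1
    ring
  rw [integral_congr_ae hstep]
  have heq : ∀ ζ' : Fin k → ℂ, (E ζ' * g₂ ζ') • T ζ (T ζ' x) = T ζ ((E ζ' * g₂ ζ') • T ζ' x) := by
    intro ζ'
    rw [(T ζ).map_smul]
  simp_rw [integral_smul, heq]
  rw [ContinuousLinearMap.integral_comp_comm (T ζ) h2int]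
end
end

section
/- Let α, β ∈ ℝᵏ with αⱼ ≤ βⱼ < αⱼ + π for all j, and let ν be a complex measure of bounded variation on S̄_{α,β} ⊆ ℂᵏ. Let λ = (λ₁, …, λ_k) with λⱼ ∈ ℂ ∖ S̄_{αⱼ,βⱼ} for each j. Then: (a) for each j there exists ωⱼ ∈ [−π/2−αⱼ, π/2−βⱼ] with Re(λⱼ e^{iωⱼ}) < 0; (b) for any such choice ω = (ω₁, …, ω_k), (1/(2πi)ᵏ) ∫₀^{e^{iω}·∞} e^{λ·σ} FB(ν)(σ) dσ = C(ν)(λ), where ∫₀^{e^{iω}·∞} h(σ) dσ denotes the iterated ray integral ∫₀^∞ ⋯ ∫₀^∞ h(t₁e^{iω₁}, …, t_k e^{iω_k}) e^{i(ω₁+⋯+ω_k)} dt₁ ⋯ dt_k. (Proposition 10.4) -/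
open Filter Topology Set MeasureTheory

noncomputable section

/-- The open positive orthant of `ℝᵏ`, used to parametrize iterated ray integrals. -/
def posOrthant (k : ℕ) : Set (Fin k → ℝ) := {t | ∀ j, 0 < t j}

lemma posOrthant_eq (k : ℕ) : posOrthant k = Set.pi Set.univ (fun _ : Fin k => Set.Ioi (0:ℝ)) := by
  ext t; simp [posOrthant, Set.mem_pi]

lemma measurableSet_posOrthant (k : ℕ) : MeasurableSet (posOrthant k) := by
  rw [posOrthant_eq]; exact MeasurableSet.univ_pi fun _ => measurableSet_Ioi

lemma indicator_posOrthant_prod {k : ℕ} {M : Type*} [CommMonoidWithZero M]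
    (f : Fin k → ℝ → M) (t : Fin k → ℝ) :
    (posOrthant k).indicator (fun t => ∏ j, f j (t j)) t
      = ∏ j, (Set.Ioi (0:ℝ)).indicator (f j) (t j) := by
  by_cases h : t ∈ posOrthant k
  · rw [Set.indicator_of_mem h]
    exact Finset.prod_congr rfl fun j _ => (Set.indicator_of_mem (h j) _).symm
  · rw [Set.indicator_of_notMem h]
    have : ∃ j, ¬ (0 < t j) := by simpa [posOrthant] using h
    obtain ⟨j, hj⟩ := this
    have hj' : t j ∉ Set.Ioi (0:ℝ) := by simpa using hj
    exact (Finset.prod_eq_zero (Finset.mem_univ j)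
      (Set.indicator_of_notMem hj' _)).symm

lemma integrableOn_cexp_mul {c : ℂ} (hc : c.re < 0) :
    IntegrableOn (fun t : ℝ => Complex.exp (t * c)) (Set.Ioi 0) := by
  have hb : (0:ℝ) < -c.re := by linarith
  refine (exp_neg_integrableOn_Ioi 0 hb).mono' ?_ ?_
  · exact (Complex.continuous_exp.comp (by fun_prop)).aestronglyMeasurable
  · filter_upwards with t
    simp only [Complex.norm_exp, Complex.re_ofReal_mul]
    rw [neg_neg]
    exact le_of_eq (by ring_nf)

lemma integral_cexp_mul_Ioi {c : ℂ} (hc : c.re < 0) :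
    ∫ t in Set.Ioi (0:ℝ), Complex.exp (t * c) = -c⁻¹ := by
  have hc0 : c ≠ 0 := fun h => by simp [h] at hc
  have hderiv : ∀ x ∈ Set.Ici (0:ℝ),
      HasDerivAt (fun t : ℝ => c⁻¹ * Complex.exp (t * c)) (Complex.exp (x * c)) x := by
    intro x _
    have h1 : HasDerivAt (fun z : ℂ => Complex.exp (z * c)) (Complex.exp ((x:ℂ) * c) * c) x :=
      (hasDerivAt_mul_const c).cexp
    have h2 := (h1.comp_ofReal).const_mul c⁻¹
    exact h2.congr_deriv (by rw [mul_comm (Complex.exp _) c, inv_mul_cancel_left₀ hc0])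
  have htend : Tendsto (fun t : ℝ => c⁻¹ * Complex.exp (t * c)) atTop (𝓝 0) := by
    rw [tendsto_zero_iff_norm_tendsto_zero]
    have h1 : Tendsto (fun t : ℝ => t * c.re) atTop atBot :=
      tendsto_id.atTop_mul_const_of_neg hc
    have h2 : Tendsto (fun t : ℝ => Real.exp (t * c.re)) atTop (𝓝 0) :=
      Real.tendsto_exp_atBot.comp h1
    have h3 := h2.const_mul ‖(c⁻¹ : ℂ)‖
    rw [mul_zero] at h3
    refine h3.congr fun t => ?_
    simp [Complex.norm_exp, Complex.re_ofReal_mul]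
  have := integral_Ioi_of_hasDerivAt_of_tendsto' hderiv (integrableOn_cexp_mul hc) htend
  simpa using this

lemma integral_posOrthant_cexp {k : ℕ} (c : Fin k → ℂ) (hc : ∀ j, (c j).re < 0) :
    ∫ t in posOrthant k, Complex.exp (∑ j, (t j : ℂ) * c j) = ∏ j, (-(c j)⁻¹) := by
  rw [← MeasureTheory.integral_indicator (measurableSet_posOrthant k)]
  have : ∀ t : Fin k → ℝ, (posOrthant k).indicator
      (fun t => Complex.exp (∑ j, (t j : ℂ) * c j)) t
      = ∏ j, (Set.Ioi (0:ℝ)).indicator (fun s => Complex.exp ((s:ℂ) * c j)) (t j) := by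
    intro t
    rw [show (fun t : Fin k → ℝ => Complex.exp (∑ j, (t j : ℂ) * c j))
        = fun t => ∏ j, Complex.exp ((t j : ℂ) * c j) from
      funext fun t => Complex.exp_sum _ _]
    exact indicator_posOrthant_prod (M := ℂ) (fun j s => Complex.exp ((s:ℂ) * c j)) t
  simp_rw [this]
  rw [MeasureTheory.integral_fintype_prod_volume_eq_prod
    (f := fun j => (Set.Ioi (0:ℝ)).indicator (fun s => Complex.exp ((s:ℂ) * c j)))]
  refine Finset.prod_congr rfl fun j _ => ?_
  rw [MeasureTheory.integral_indicator measurableSet_Ioi]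
  exact integral_cexp_mul_Ioi (hc j)

lemma integrableOn_posOrthant_rexp {k : ℕ} (r : Fin k → ℝ) (hr : ∀ j, r j < 0) :
    IntegrableOn (fun t : Fin k → ℝ => Real.exp (∑ j, t j * r j)) (posOrthant k) := by
  rw [← integrable_indicator_iff (measurableSet_posOrthant k)]
  have : (posOrthant k).indicator (fun t : Fin k → ℝ => Real.exp (∑ j, t j * r j))
      = fun t => ∏ j, (Set.Ioi (0:ℝ)).indicator (fun s => Real.exp (s * r j)) (t j) := by
    funext t
    rw [show (fun t : Fin k → ℝ => Real.exp (∑ j, t j * r j))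
        = fun t => ∏ j, Real.exp (t j * r j) from funext fun t => Real.exp_sum _ _]
    exact indicator_posOrthant_prod (M := ℝ) (fun j s => Real.exp (s * r j)) t
  rw [this]
  refine MeasureTheory.Integrable.fintype_prod fun j => ?_
  rw [integrable_indicator_iff measurableSet_Ioi]
  have hb : (0:ℝ) < -(r j) := by linarith [hr j]
  have := exp_neg_integrableOn_Ioi 0 hb
  refine this.congr_fun (fun x _ => by ring_nf) measurableSet_Ioi

lemma sector_re_nonneg {a b ω : ℝ} {z : ℂ} (hz : z ∈ closedSector a b)
    (h1 : -(Real.pi/2) - a ≤ ω) (h2 : ω ≤ Real.pi/2 - b) :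
    0 ≤ (Complex.exp ((ω:ℂ) * Complex.I) * z).re := by
  obtain ⟨r, hr, θ, hθ, rfl⟩ := hz
  have : Complex.exp ((ω:ℂ) * Complex.I) * ((r:ℂ) * Complex.exp ((θ:ℂ) * Complex.I))
      = (r:ℂ) * Complex.exp ((↑(ω + θ):ℂ) * Complex.I) := by
    push_cast
    rw [add_mul, Complex.exp_add]
    ring
  rw [this, Complex.re_ofReal_mul, Complex.exp_ofReal_mul_I_re]
  refine mul_nonneg hr (Real.cos_nonneg_of_mem_Icc ⟨?_, ?_⟩)
  · have := hθ.1; linarith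
  · have := hθ.2; linarith

lemma part_a {a b : ℝ} (hab : a ≤ b) (hpi : b < a + Real.pi) {l : ℂ}
    (hl : l ∉ closedSector a b) :
    ∃ ω ∈ Set.Icc (-(Real.pi / 2) - a) (Real.pi / 2 - b),
      (l * Complex.exp ((ω : ℂ) * Complex.I)).re < 0 := by
  have hπpos := Real.pi_pos
  have h2π : (0:ℝ) < 2 * Real.pi := by linarith
  have hl0 : l ≠ 0 := by
    rintro rfl
    exact hl ⟨0, le_refl _, a, ⟨le_refl _, hab⟩, by simp⟩
  set φ := Complex.arg l with hφ
  set n : ℤ := ⌈(a - φ) / (2 * Real.pi)⌉ with hn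
  set ψ := φ + 2 * Real.pi * n with hψ
  have hψ1 : a ≤ ψ := by
    have h := Int.le_ceil ((a - φ) / (2 * Real.pi))
    rw [div_le_iff₀ h2π] at h
    rw [hψ]; push_cast at h ⊢; linarith
  have hψ2 : ψ < a + 2 * Real.pi := by
    have h := Int.ceil_lt_add_one ((a - φ) / (2 * Real.pi))
    rw [← hn] at h
    have h' := mul_lt_mul_of_pos_right h h2π
    rw [add_mul, div_mul_cancel₀ _ (ne_of_gt h2π)] at h'
    rw [hψ]; linarith
  have hexp : Complex.exp ((ψ : ℂ) * Complex.I) = Complex.exp ((φ : ℂ) * Complex.I) := by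
    have : ((ψ : ℝ) : ℂ) * Complex.I
        = (φ : ℂ) * Complex.I + (n : ℂ) * (2 * (Real.pi : ℂ) * Complex.I) := by
      rw [hψ]; push_cast; ring
    rw [this, Complex.exp_add, Complex.exp_int_mul_two_pi_mul_I, mul_one]
  have hlψ : l = (‖l‖ : ℂ) * Complex.exp ((ψ : ℂ) * Complex.I) := by
    rw [hexp]; exact (Complex.norm_mul_exp_arg_mul_I l).symm
  have hψb : ψ ∉ Set.Icc a b := fun hin =>
    hl ⟨‖l‖, norm_nonneg l, ψ, hin, hlψ⟩
  have hbψ : b < ψ := by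
    rcases lt_or_ge b ψ with h | h
    · exact h
    · exact absurd ⟨hψ1, h⟩ hψb
  set L := max (Real.pi / 2) (ψ - Real.pi / 2 - a) with hL
  set U := min (Real.pi + Real.pi / 2) (ψ + Real.pi / 2 - b) with hU
  have hLU : L < U :=
    max_lt (lt_min (by linarith) (by linarith)) (lt_min (by linarith) (by linarith))
  set ξ := (L + U) / 2 with hξ
  have hξ1 : L < ξ := by rw [hξ]; linarith
  have hξ2 : ξ < U := by rw [hξ]; linarith
  have hξa : Real.pi / 2 < ξ := lt_of_le_of_lt (le_max_left _ _) hξ1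
  have hξb : ξ < Real.pi + Real.pi / 2 := lt_of_lt_of_le hξ2 (min_le_left _ _)
  refine ⟨ξ - ψ, ⟨?_, ?_⟩, ?_⟩
  · have h := le_max_right (Real.pi / 2) (ψ - Real.pi / 2 - a); rw [← hL] at h; linarith
  · have h := min_le_right (Real.pi + Real.pi / 2) (ψ + Real.pi / 2 - b); rw [← hU] at h; linarith
  · rw [hlψ, mul_assoc, ← Complex.exp_add,
      show (ψ : ℂ) * Complex.I + ((ξ - ψ : ℝ) : ℂ) * Complex.I = (ξ : ℂ) * Complex.I by
        push_cast; ring,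
      Complex.re_ofReal_mul, Complex.exp_ofReal_mul_I_re]
    exact mul_neg_of_pos_of_neg ((norm_pos_iff.mpr hl0))
      (Real.cos_neg_of_pi_div_two_lt_of_lt hξa hξb)

/-- Proposition 10.4.  A complex measure `ν` of bounded variation on
`S̄_{α,β} ⊆ ℂᵏ` is encoded as a finite measure `μ` concentrated on `S̄_{α,β}` together with an
integrable density `g`.  Its Fourier–Borel transform is `FB(ν)(σ) = ∫ e^{−σ·ζ} g(ζ) dμ(ζ)` and
its Cauchy transform is `C(ν)(λ) = (2πi)^{-k} ∫ Πⱼ (ζⱼ−λⱼ)⁻¹ g(ζ) dμ(ζ)`. -/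
theorem statement11
    {k : ℕ}
    (α β : Fin k → ℝ) (hαβ : ∀ j, α j ≤ β j) (hπ : ∀ j, β j < α j + Real.pi)
    (S : Set (Fin k → ℂ)) (hS : S = {ζ | ∀ j, ζ j ∈ closedSector (α j) (β j)})
    (μ : MeasureTheory.Measure (Fin k → ℂ)) [MeasureTheory.IsFiniteMeasure μ]
    (g : (Fin k → ℂ) → ℂ)
    (hg : MeasureTheory.Integrable g μ) (hsupp : μ Sᶜ = 0)
    (lam : Fin k → ℂ) (hlam : ∀ j, lam j ∉ closedSector (α j) (β j)) :
    -- (a)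
    (∀ j, ∃ ω ∈ Set.Icc (-(Real.pi / 2) - α j) (Real.pi / 2 - β j),
      (lam j * Complex.exp ((ω : ℂ) * Complex.I)).re < 0) ∧
    -- (b)
    (∀ ωv : Fin k → ℝ,
      (∀ j, ωv j ∈ Set.Icc (-(Real.pi / 2) - α j) (Real.pi / 2 - β j) ∧
        (lam j * Complex.exp ((ωv j : ℂ) * Complex.I)).re < 0) →
      (1 / (2 * (Real.pi : ℂ) * Complex.I)) ^ k *
        ∫ t in posOrthant k,
          (Complex.exp (∑ j, lam j * ((t j : ℂ) * Complex.exp ((ωv j : ℂ) * Complex.I))) *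
            (∫ ζ, Complex.exp (-∑ j, ((t j : ℂ) * Complex.exp ((ωv j : ℂ) * Complex.I)) * ζ j) *
              g ζ ∂μ)) *
          ∏ j, Complex.exp ((ωv j : ℂ) * Complex.I)
      = (1 / (2 * (Real.pi : ℂ) * Complex.I)) ^ k *
          ∫ ζ, (∏ j, (ζ j - lam j)⁻¹) * g ζ ∂μ) := by
  constructor
  · intro j; exact part_a (hαβ j) (hπ j) (hlam j)
  intro ωv hω
  congr 1
  set e : Fin k → ℂ := fun j => Complex.exp ((ωv j : ℂ) * Complex.I) with he
  have hene : ∀ j, e j ≠ 0 := fun j => Complex.exp_ne_zero _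
  have haeS : ∀ᵐ ζ ∂μ, ζ ∈ S := by
    rw [MeasureTheory.ae_iff]
    exact hsupp
  set f : (Fin k → ℝ) → (Fin k → ℂ) → ℂ :=
    fun t ζ => Complex.exp (∑ j, (t j : ℂ) * (e j * (lam j - ζ j))) * g ζ with hf
  set r : Fin k → ℝ := fun j => (lam j * e j).re with hr
  have hrneg : ∀ j, r j < 0 := fun j => (hω j).2
  have hcre : ∀ ζ ∈ S, ∀ j, (e j * (lam j - ζ j)).re ≤ r j := by
    intro ζ hζ j
    rw [hS] at hζ
    have h0 : 0 ≤ (e j * ζ j).re :=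
      sector_re_nonneg (hζ j) (hω j).1.1 (hω j).1.2
    rw [mul_sub, Complex.sub_re]
    have hlr : (e j * lam j).re = r j := by rw [hr, mul_comm]
    linarith
  have h1 : ∀ᵐ p ∂((volume.restrict (posOrthant k)).prod μ), p.1 ∈ posOrthant k := by
    rw [MeasureTheory.ae_iff]
    refine measure_mono_null (fun p hp => ?_)
      (?_ : ((volume.restrict (posOrthant k)).prod μ) ((posOrthant k)ᶜ ×ˢ univ) = 0)
    · exact ⟨hp, trivial⟩
    · rw [Measure.prod_prod, Measure.restrict_apply (measurableSet_posOrthant k).compl,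
        compl_inter_self, measure_empty, zero_mul]
  have h2 : ∀ᵐ p ∂((volume.restrict (posOrthant k)).prod μ), p.2 ∈ S := by
    obtain ⟨T, hST, hTm, hT0⟩ := exists_measurable_superset_of_null hsupp
    rw [MeasureTheory.ae_iff]
    refine measure_mono_null (fun p hp => ?_)
      (?_ : ((volume.restrict (posOrthant k)).prod μ) (univ ×ˢ T) = 0)
    · exact ⟨trivial, hST hp⟩
    · rw [Measure.prod_prod, hT0, mul_zero]
  have hmeas : AEStronglyMeasurable (Function.uncurry f)
      ((volume.restrict (posOrthant k)).prod μ) := by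
    apply AEStronglyMeasurable.mul
    · refine Continuous.aestronglyMeasurable ?_
      refine Complex.continuous_exp.comp (continuous_finset_sum _ fun j _ => ?_)
      fun_prop
    · exact hg.aestronglyMeasurable.comp_quasiMeasurePreserving
        Measure.quasiMeasurePreserving_snd
  have hbnd : Integrable (fun p : (Fin k → ℝ) × (Fin k → ℂ) =>
      Real.exp (∑ j, p.1 j * r j) * ‖g p.2‖) ((volume.restrict (posOrthant k)).prod μ) :=
    (integrableOn_posOrthant_rexp r hrneg).mul_prod hg.norm
  have hInt : Integrable (Function.uncurry f) ((volume.restrict (posOrthant k)).prod μ) := by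
    refine hbnd.mono' hmeas ?_
    filter_upwards [h1, h2] with p hp1 hp2
    rw [Function.uncurry, hf]
    rw [norm_mul]
    refine mul_le_mul_of_nonneg_right ?_ (norm_nonneg _)
    rw [Complex.norm_exp, Real.exp_le_exp, Complex.re_sum]
    refine Finset.sum_le_sum fun j _ => ?_
    rw [Complex.re_ofReal_mul]
    exact mul_le_mul_of_nonneg_left (hcre p.2 hp2 j) (le_of_lt (hp1 j))
  calc
    ∫ t in posOrthant k,
        (Complex.exp (∑ j, lam j * ((t j : ℂ) * e j)) *
          (∫ ζ, Complex.exp (-∑ j, ((t j : ℂ) * e j) * ζ j) * g ζ ∂μ)) * ∏ j, e j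
      = ∫ t in posOrthant k, (∏ j, e j) * ∫ ζ, f t ζ ∂μ := by
        refine integral_congr_ae (Eventually.of_forall fun t => ?_)
        beta_reduce
        rw [mul_comm _ (∏ j, e j)]
        congr 1
        rw [← MeasureTheory.integral_const_mul]
        refine integral_congr_ae (Eventually.of_forall fun ζ => ?_)
        simp only [hf]
        rw [← mul_assoc, ← Complex.exp_add, ← sub_eq_add_neg, ← Finset.sum_sub_distrib]
        congr 2
        exact Finset.sum_congr rfl fun j _ => by ring
    _ = (∏ j, e j) * ∫ t in posOrthant k, ∫ ζ, f t ζ ∂μ :=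
        MeasureTheory.integral_const_mul _ _
    _ = (∏ j, e j) * ∫ ζ, (∫ t in posOrthant k, f t ζ) ∂μ := by
        rw [integral_integral_swap hInt]
    _ = ∫ ζ, (∏ j, e j) * (∫ t in posOrthant k, f t ζ) ∂μ :=
        (MeasureTheory.integral_const_mul _ _).symm
    _ = ∫ ζ, (∏ j, (ζ j - lam j)⁻¹) * g ζ ∂μ := by
        refine integral_congr_ae (haeS.mono fun ζ hζ => ?_)
        have hcre' : ∀ j, (e j * (lam j - ζ j)).re < 0 :=
          fun j => lt_of_le_of_lt (hcre ζ hζ j) (hrneg j)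
        simp only [hf]
        rw [MeasureTheory.integral_mul_const, integral_posOrthant_cexp _ hcre', ← mul_assoc]
        congr 1
        rw [← Finset.prod_mul_distrib]
        refine Finset.prod_congr rfl fun j _ => ?_
        rw [← inv_neg, show -(e j * (lam j - ζ j)) = e j * (ζ j - lam j) by ring,
          mul_inv, ← mul_assoc, mul_inv_cancel₀ (hene j), one_mul]
end
end

section
/- Let α, β ∈ ℝᵏ with αⱼ ≤ βⱼ < αⱼ + π for all j, and let z, z' ∈ ℂᵏ with z' ∈ z + S̄*_{α,β}. Then e_{−z'}·U_{α,β} := { ζ ↦ e^{−z'·ζ} g(ζ) : g ∈ U_{α,β} } is contained in e_{−z}·U_{α,β}, and e_{−z'}·U_{α,β} is dense in e_{−z}·U_{α,β} for the norm ‖f‖ := sup_{ζ ∈ S̄_{α,β}} |e^{z·ζ} f(ζ)|. (Proposition 11.2(ii)) -/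
open Filter Topology Set

noncomputable section

/-- The closed multisector `S̄_{α,β} = Πⱼ S̄_{αⱼ,βⱼ} ⊆ ℂᵏ`. -/
def multiSector {k : ℕ} (α β : Fin k → ℝ) : Set (Fin k → ℂ) :=
  {ζ | ∀ j, ζ j ∈ closedSector (α j) (β j)}

/-- Membership in the space `U_{α,β}`: continuous on the closed multisector, vanishing at
infinity there, and holomorphic in each coordinate separately on the open sectors. -/
def memU {k : ℕ} (α β : Fin k → ℝ) (f : (Fin k → ℂ) → ℂ) : Prop :=
  ContinuousOn f (multiSector α β) ∧
  Filter.Tendsto f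
    (Filter.principal (multiSector α β) ⊓
      Filter.comap (fun ζ : Fin k → ℂ => ‖ζ‖) Filter.atTop) (nhds 0) ∧
  ∀ j : Fin k, α j < β j → ∀ ζ ∈ multiSector α β,
    DifferentiableOn ℂ (fun u : ℂ => f (Function.update ζ j u)) (openSector (α j) (β j))

namespace Stmt15

open Complex Real

lemma openSector_subset (a b : ℝ) : openSector a b ⊆ closedSector a b := by
  rintro z ⟨r, hr, θ, hθ, rfl⟩
  exact ⟨r, hr.le, θ, ⟨hθ.1.le, hθ.2.le⟩, rfl⟩

lemma abs_polar {r : ℝ} (θ : ℝ) (hr : 0 ≤ r) :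
    ‖(r : ℂ) * Complex.exp ((θ : ℂ) * Complex.I)‖ = r := by
  rw [norm_mul, Complex.norm_exp_ofReal_mul_I, mul_one, Complex.norm_real, Real.norm_eq_abs,
    _root_.abs_of_nonneg hr]

/-- key dual-sector positivity -/
lemma re_mul_nonneg {a b : ℝ} {w u : ℂ}
    (hw : w ∈ closedSector (-(Real.pi / 2) - a) (Real.pi / 2 - b))
    (hu : u ∈ closedSector a b) : 0 ≤ (w * u).re := by
  obtain ⟨ρ, hρ, σ, hσ, rfl⟩ := hw
  obtain ⟨r, hr, θ, hθ, rfl⟩ := hu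
  have h1 : (ρ : ℂ) * Complex.exp ((σ : ℂ) * Complex.I) *
      ((r : ℂ) * Complex.exp ((θ : ℂ) * Complex.I)) =
      ((ρ * r : ℝ) : ℂ) * Complex.exp (((σ + θ : ℝ) : ℂ) * Complex.I) := by
    push_cast
    rw [add_mul, Complex.exp_add]
    ring
  rw [h1, Complex.re_ofReal_mul, Complex.exp_ofReal_mul_I_re]
  have hσ1 := hσ.1; have hσ2 := hσ.2; have hθ1 := hθ.1; have hθ2 := hθ.2
  have hc : 0 ≤ Real.cos (σ + θ) := by
    apply Real.cos_nonneg_of_mem_Icc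
    constructor <;> linarith
  positivity

/-- the exponent -/
def pex (a b : ℝ) : ℝ := 2 * Real.pi / ((b - a) + Real.pi)

lemma pex_pos {a b : ℝ} (hab : a ≤ b) : 0 < pex a b := by
  have := Real.pi_pos
  apply div_pos <;> nlinarith

lemma one_lt_pex {a b : ℝ} (hab : a ≤ b) (h : b < a + Real.pi) : 1 < pex a b := by
  have := Real.pi_pos
  rw [pex, lt_div_iff₀ (by nlinarith)]
  nlinarith

lemma pex_half_lt {a b : ℝ} (hab : a ≤ b) (h : b < a + Real.pi) :
    pex a b * ((b - a) / 2) < Real.pi / 2 := by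
  have := Real.pi_pos
  rw [pex, div_mul_eq_mul_div, div_lt_div_iff₀ (by nlinarith) two_pos]
  nlinarith

lemma pex_half_nonneg {a b : ℝ} (hab : a ≤ b) : 0 ≤ pex a b * ((b - a) / 2) := by
  have := pex_pos hab
  nlinarith

lemma cosP_pos {a b : ℝ} (hab : a ≤ b) (h : b < a + Real.pi) :
    0 < Real.cos (pex a b * ((b - a) / 2)) := by
  apply Real.cos_pos_of_mem_Ioo
  constructor
  · have := Real.pi_pos; have := pex_half_nonneg hab; linarith
  · exact pex_half_lt hab h

/-- rotation factor -/
def rot (a b : ℝ) : ℂ := Complex.exp (-(((a + b) / 2 : ℝ) : ℂ) * Complex.I)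

/-- the superlinear power function -/
def secPow (a b : ℝ) (u : ℂ) : ℂ := (rot a b * u) ^ ((pex a b : ℝ) : ℂ)

lemma rot_mul_polar (a b r θ : ℝ) :
    rot a b * ((r : ℂ) * Complex.exp ((θ : ℂ) * Complex.I)) =
      (r : ℂ) * Complex.exp (((θ - (a + b) / 2 : ℝ) : ℂ) * Complex.I) := by
  rw [rot]
  have h : ((θ - (a + b) / 2 : ℝ) : ℂ) * Complex.I =
      -(((a + b) / 2 : ℝ) : ℂ) * Complex.I + (θ : ℂ) * Complex.I := by
    push_cast; ring
  rw [h, Complex.exp_add]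
  ring

lemma polar_cpow {r ψ p : ℝ} (hr : 0 < r) (h1 : -Real.pi < ψ) (h2 : ψ ≤ Real.pi) :
    ((r : ℂ) * Complex.exp ((ψ : ℂ) * Complex.I)) ^ ((p : ℝ) : ℂ) =
      ((r ^ p : ℝ) : ℂ) * Complex.exp (((p * ψ : ℝ) : ℂ) * Complex.I) := by
  have hw : (r : ℂ) * Complex.exp ((ψ : ℂ) * Complex.I) =
      Complex.exp (((Real.log r : ℝ) : ℂ) + (ψ : ℂ) * Complex.I) := by
    rw [Complex.exp_add, ← Complex.ofReal_exp, Real.exp_log hr]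
  rw [hw, Complex.cpow_def_of_ne_zero (Complex.exp_ne_zero _),
    Complex.log_exp (by simpa using h1) (by simpa using h2)]
  rw [Real.rpow_def_of_pos hr, Complex.ofReal_exp, ← Complex.exp_add]
  congr 1
  push_cast
  ring

section coord

variable {a b : ℝ}

lemma psi_bounds {θ : ℝ} (hθ : θ ∈ Set.Icc a b) :
    |θ - (a + b) / 2| ≤ (b - a) / 2 := by
  have h1 := hθ.1; have h2 := hθ.2
  rw [abs_le]
  constructor <;> linarith

lemma secPow_zero (hab : a ≤ b) : secPow a b 0 = 0 := by
  rw [secPow, mul_zero]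
  exact Complex.zero_cpow (by exact_mod_cast (pex_pos hab).ne')

lemma secPow_re_ge (hab : a ≤ b) (hb : b < a + Real.pi) {u : ℂ}
    (hu : u ∈ closedSector a b) :
    Real.cos (pex a b * ((b - a) / 2)) * ‖u‖ ^ (pex a b) ≤ (secPow a b u).re := by
  obtain ⟨r, hr, θ, hθ, rfl⟩ := hu
  have hπ := Real.pi_pos
  rcases hr.eq_or_lt with h0 | h0
  · subst h0
    simp only [Complex.ofReal_zero, zero_mul]
    rw [secPow_zero hab]
    simp [Real.zero_rpow (pex_pos hab).ne']
  · have hψ := psi_bounds hθ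
    have hba : b - a < Real.pi := by linarith
    have hψ1 : -Real.pi < θ - (a + b) / 2 := by
      have := abs_le.mp hψ; linarith [this.1]
    have hψ2 : θ - (a + b) / 2 ≤ Real.pi := by
      have := abs_le.mp hψ; linarith [this.2]
    rw [secPow, rot_mul_polar, polar_cpow h0 hψ1 hψ2, Complex.re_ofReal_mul,
      Complex.exp_ofReal_mul_I_re, abs_polar θ hr]
    have hcc : Real.cos (pex a b * ((b - a) / 2)) ≤
        Real.cos (pex a b * (θ - (a + b) / 2)) := by
      have h3 : |pex a b * (θ - (a + b) / 2)| ≤ pex a b * ((b - a) / 2) := by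
        rw [abs_mul, abs_of_pos (pex_pos hab)]
        exact mul_le_mul_of_nonneg_left hψ (pex_pos hab).le
      calc Real.cos (pex a b * ((b - a) / 2))
          ≤ Real.cos |pex a b * (θ - (a + b) / 2)| :=
            Real.cos_le_cos_of_nonneg_of_le_pi (abs_nonneg _)
              (by linarith [pex_half_lt hab hb]) h3
        _ = Real.cos (pex a b * (θ - (a + b) / 2)) := Real.cos_abs _
    have hrp : (0:ℝ) ≤ r ^ pex a b := Real.rpow_nonneg hr _
    calc Real.cos (pex a b * ((b - a) / 2)) * r ^ pex a b
        ≤ Real.cos (pex a b * (θ - (a + b) / 2)) * r ^ pex a b :=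
          mul_le_mul_of_nonneg_right hcc hrp
      _ = r ^ pex a b * Real.cos (pex a b * (θ - (a + b) / 2)) := mul_comm _ _

lemma secPow_re_nonneg (hab : a ≤ b) (hb : b < a + Real.pi) {u : ℂ}
    (hu : u ∈ closedSector a b) : 0 ≤ (secPow a b u).re := by
  refine le_trans ?_ (secPow_re_ge hab hb hu)
  have := cosP_pos hab hb
  have := Real.rpow_nonneg (norm_nonneg u) (pex a b)
  positivity

lemma secPow_abs (hab : a ≤ b) (hb : b < a + Real.pi) {u : ℂ}
    (hu : u ∈ closedSector a b) :
    ‖secPow a b u‖ = ‖u‖ ^ (pex a b) := by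
  obtain ⟨r, hr, θ, hθ, rfl⟩ := hu
  have hπ := Real.pi_pos
  rcases hr.eq_or_lt with h0 | h0
  · subst h0
    simp only [Complex.ofReal_zero, zero_mul]
    rw [secPow_zero hab]
    simp [Real.zero_rpow (pex_pos hab).ne']
  · have hψ := abs_le.mp (psi_bounds hθ)
    have hba : b - a < Real.pi := by linarith
    have hψ1 : -Real.pi < θ - (a + b) / 2 := by linarith [hψ.1]
    have hψ2 : θ - (a + b) / 2 ≤ Real.pi := by linarith [hψ.2]
    rw [secPow, rot_mul_polar, polar_cpow h0 hψ1 hψ2,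
      abs_polar _ (Real.rpow_nonneg hr _), abs_polar θ hr]

lemma rot_mul_re_pos (hab : a ≤ b) (hb : b < a + Real.pi) {u : ℂ}
    (hu : u ∈ closedSector a b) (h0 : u ≠ 0) : 0 < (rot a b * u).re := by
  obtain ⟨r, hr, θ, hθ, rfl⟩ := hu
  have hπ := Real.pi_pos
  have hr' : 0 < r := by
    rcases hr.eq_or_lt with h | h
    · exfalso; apply h0; rw [← h]; simp
    · exact h
  rw [rot_mul_polar, Complex.re_ofReal_mul, Complex.exp_ofReal_mul_I_re]
  have hψ := abs_le.mp (psi_bounds hθ)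
  have hba : b - a < Real.pi := by linarith
  have hc : 0 < Real.cos (θ - (a + b) / 2) := by
    apply Real.cos_pos_of_mem_Ioo
    constructor
    · linarith [hψ.1, Real.pi_pos]
    · linarith [hψ.2, Real.pi_pos]
  positivity

lemma secPow_continuousOn (hab : a ≤ b) (hb : b < a + Real.pi) :
    ContinuousOn (secPow a b) (closedSector a b) := by
  intro u hu
  by_cases h0 : u = 0
  · subst h0
    have hval : secPow a b 0 = 0 := secPow_zero hab
    rw [ContinuousWithinAt, hval]
    apply squeeze_zero_norm' (a := fun u : ℂ => ‖u‖ ^ (pex a b))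
    · filter_upwards [self_mem_nhdsWithin] with v hv
      rw [secPow_abs hab hb hv]
    · have hra : ContinuousAt (fun x : ℝ => x ^ (pex a b)) (‖(0 : ℂ)‖) :=
        Real.continuousAt_rpow_const _ _ (Or.inr (pex_pos hab).le)
      have hcont := ContinuousAt.comp hra continuous_norm.continuousAt
      have h00 : ‖(0 : ℂ)‖ ^ (pex a b) = 0 := by
        simp [Real.zero_rpow (pex_pos hab).ne']
      have ht : Filter.Tendsto (fun u : ℂ => ‖u‖ ^ (pex a b)) (𝓝 0) (𝓝 0) := by
        have := hcont.tendsto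
        simp only [Function.comp_def, Function.comp_apply] at this
        rwa [h00] at this
      exact ht.mono_left nhdsWithin_le_nhds
  · apply ContinuousAt.continuousWithinAt
    have hslit : rot a b * u ∈ Complex.slitPlane :=
      Complex.mem_slitPlane_iff.mpr (Or.inl (rot_mul_re_pos hab hb hu h0))
    exact (continuousAt_cpow_const hslit).comp
      ((continuous_const.mul continuous_id).continuousAt)

lemma secPow_differentiableOn (hab : a ≤ b) (hb : b < a + Real.pi) :
    DifferentiableOn ℂ (secPow a b) (openSector a b) := by
  intro u hu
  have hu' : u ∈ closedSector a b := openSector_subset a b hu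
  have h0 : u ≠ 0 := by
    obtain ⟨r, hr, θ, hθ, rfl⟩ := hu
    intro h
    have := abs_polar θ hr.le
    rw [h] at this
    simp at this
    exact hr.ne' this.symm
  have hslit : rot a b * u ∈ Complex.slitPlane :=
    Complex.mem_slitPlane_iff.mpr (Or.inl (rot_mul_re_pos hab hb hu' h0))
  exact (DifferentiableAt.cpow ((differentiableAt_const _).mul differentiableAt_id)
    (differentiableAt_const _) hslit).differentiableWithinAt

end coord

/-- elementary calculus bound: `a r − b r^p` is bounded above for `p > 1`. -/
lemma linear_sub_rpow_bound {a b p : ℝ} (ha : 0 ≤ a) (hb : 0 < b) (hp : 1 < p) :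
    ∃ K : ℝ, 0 ≤ K ∧ ∀ r : ℝ, 0 ≤ r → a * r - b * r ^ p ≤ K := by
  set r₀ : ℝ := (a / b) ^ (1 / (p - 1)) with hr₀def
  have hab' : 0 ≤ a / b := div_nonneg ha hb.le
  have hr₀ : 0 ≤ r₀ := Real.rpow_nonneg hab' _
  refine ⟨a * r₀, mul_nonneg ha hr₀, ?_⟩
  intro r hr
  rcases hr.eq_or_lt with h | hrpos
  · have h5 : (0:ℝ) ^ p = 0 := Real.zero_rpow (by linarith)
    rw [← h, h5, mul_zero, mul_zero, sub_zero]
    exact mul_nonneg ha hr₀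
  rcases le_total r r₀ with h | h
  · have h1 : a * r ≤ a * r₀ := mul_le_mul_of_nonneg_left h ha
    have h2 : 0 ≤ b * r ^ p := mul_nonneg hb.le (Real.rpow_nonneg hr _)
    linarith
  · have hp1 : p - 1 ≠ 0 := by linarith
    have h1 : r₀ ^ (p - 1) = a / b := by
      rw [hr₀def, ← Real.rpow_mul hab', one_div, inv_mul_cancel₀ hp1, Real.rpow_one]
    have h2 : r ^ p = r ^ (p - 1) * r := by
      have hh := Real.rpow_add_one hrpos.ne' (p - 1)
      rw [sub_add_cancel] at hh
      exact hh
    have h3 : r₀ ^ (p - 1) ≤ r ^ (p - 1) := Real.rpow_le_rpow hr₀ h (by linarith)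
    have h4 : a * r ≤ b * r ^ p := by
      have h6 : b * (r₀ ^ (p - 1)) * r ≤ b * (r ^ (p - 1)) * r :=
        mul_le_mul_of_nonneg_right (mul_le_mul_of_nonneg_left h3 hb.le) hr
      rw [h1] at h6
      rw [h2]
      calc a * r = b * (a / b) * r := by field_simp
        _ ≤ b * (r ^ (p - 1)) * r := h6
        _ = b * (r ^ (p - 1) * r) := by ring
    have h7 := mul_nonneg ha hr₀
    linarith

section memUlemmas

variable {k : ℕ} {α β : Fin k → ℝ}

lemma eventually_mem_multiSector :
    ∀ᶠ ζ in (Filter.principal (multiSector α β) ⊓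
      Filter.comap (fun ζ : Fin k → ℂ => ‖ζ‖) Filter.atTop), ζ ∈ multiSector α β :=
  Filter.Eventually.filter_mono inf_le_left
    (Filter.eventually_principal.mpr (fun _ h => h))

/-- tail smallness of a memU function -/
lemma memU_tail {g : (Fin k → ℂ) → ℂ} (hg : memU α β g) {δ : ℝ} (hδ : 0 < δ) :
    ∃ R : ℝ, 0 < R ∧ ∀ ζ ∈ multiSector α β, R ≤ ‖ζ‖ → ‖g ζ‖ ≤ δ := by
  have hev : ∀ᶠ ζ in (Filter.principal (multiSector α β) ⊓
      Filter.comap (fun ζ : Fin k → ℂ => ‖ζ‖) Filter.atTop), ‖g ζ‖ < δ := by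
    have := Metric.tendsto_nhds.mp hg.2.1 δ hδ
    simpa [dist_zero_right] using this
  rw [Filter.eventually_inf] at hev
  obtain ⟨A, hA, B, hB, hAB⟩ := hev
  rw [Filter.mem_comap] at hB
  obtain ⟨tS, htS, hti⟩ := hB
  obtain ⟨R, hR⟩ := Filter.mem_atTop_sets.mp htS
  refine ⟨max R 1, lt_of_lt_of_le one_pos (le_max_right _ _), ?_⟩
  intro ζ hζ hn
  have hmem : ζ ∈ A ∩ B :=
    ⟨Filter.mem_principal.mp hA hζ, hti (hR ‖ζ‖ ((le_max_left _ _).trans hn))⟩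
  exact (hAB ζ hmem).le

lemma isCompact_sector_ball (a b R : ℝ) :
    IsCompact (closedSector a b ∩ Metric.closedBall 0 R) := by
  have himg : closedSector a b ∩ Metric.closedBall 0 R =
      (fun x : ℝ × ℝ => (x.1 : ℂ) * Complex.exp ((x.2 : ℂ) * Complex.I)) ''
        (Set.Icc 0 R ×ˢ Set.Icc a b) := by
    ext z
    constructor
    · rintro ⟨⟨r, hr, θ, hθ, rfl⟩, hball⟩
      refine ⟨(r, θ), ⟨⟨hr, ?_⟩, hθ⟩, rfl⟩
      have h1 : ‖(r : ℂ) * Complex.exp ((θ : ℂ) * Complex.I)‖ ≤ R := by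
        simpa [dist_zero_right] using (Metric.mem_closedBall.mp hball)
      rwa [abs_polar θ hr] at h1
    · rintro ⟨⟨r, θ⟩, ⟨⟨hr0, hrR⟩, hθ⟩, rfl⟩
      refine ⟨⟨r, hr0, θ, hθ, rfl⟩, ?_⟩
      rw [Metric.mem_closedBall, dist_zero_right, abs_polar θ hr0]
      exact hrR
  rw [himg]
  apply (isCompact_Icc.prod isCompact_Icc).image
  fun_prop

/-- global boundedness of a memU function -/
lemma memU_bounded {g : (Fin k → ℂ) → ℂ} (hg : memU α β g) :
    ∃ M : ℝ, 0 ≤ M ∧ ∀ ζ ∈ multiSector α β, ‖g ζ‖ ≤ M := by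
  obtain ⟨R, hR, htail⟩ := memU_tail hg one_pos
  set K : Set (Fin k → ℂ) :=
    Set.univ.pi (fun j => closedSector (α j) (β j) ∩ Metric.closedBall 0 R) with hK
  have hKc : IsCompact K := isCompact_univ_pi (fun j => isCompact_sector_ball _ _ _)
  have hKS : K ⊆ multiSector α β := by
    intro ζ hζ j
    exact (hζ j (Set.mem_univ j)).1
  obtain ⟨C, hC⟩ := hKc.exists_bound_of_continuousOn (hg.1.mono hKS)
  refine ⟨max C 1, le_trans zero_le_one (le_max_right _ _), ?_⟩
  intro ζ hζ
  rcases le_total ‖ζ‖ R with h | h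
  · have : ζ ∈ K := by
      intro j _
      refine ⟨hζ j, ?_⟩
      rw [Metric.mem_closedBall, dist_zero_right]
      exact (norm_le_pi_norm ζ j).trans h
    exact (hC ζ this).trans (le_max_left _ _)
  · exact (htail ζ hζ h).trans (le_max_right _ _)

/-- multiplying a memU function by a nice bounded multiplier -/
lemma memU_mul {φ g : (Fin k → ℂ) → ℂ} {B : ℝ}
    (hφc : ContinuousOn φ (multiSector α β))
    (hφd : ∀ j : Fin k, α j < β j → ∀ ζ ∈ multiSector α β,
      DifferentiableOn ℂ (fun u : ℂ => φ (Function.update ζ j u)) (openSector (α j) (β j)))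
    (hφb : ∀ ζ ∈ multiSector α β, ‖φ ζ‖ ≤ B)
    (hg : memU α β g) : memU α β (fun ζ => φ ζ * g ζ) := by
  refine ⟨hφc.mul hg.1, ?_, ?_⟩
  · apply squeeze_zero_norm' (a := fun ζ => B * ‖g ζ‖)
    · filter_upwards [eventually_mem_multiSector] with ζ hζ
      rw [norm_mul]
      exact mul_le_mul_of_nonneg_right (hφb ζ hζ) (norm_nonneg _)
    · have h1 := hg.2.1.norm
      rw [norm_zero] at h1
      have h2 := h1.const_mul B
      rwa [mul_zero] at h2
  · intro j hj ζ hζ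
    exact (hφd j hj ζ hζ).mul (hg.2.2 j hj ζ hζ)

/-- multiplier of the form `exp (∑ⱼ fⱼ(ζⱼ))` -/
lemma memU_exp_mul (f : Fin k → ℂ → ℂ) (K : Fin k → ℝ)
    (hc : ∀ j, ContinuousOn (f j) (closedSector (α j) (β j)))
    (hd : ∀ j, DifferentiableOn ℂ (f j) (openSector (α j) (β j)))
    (hre : ∀ j, ∀ u ∈ closedSector (α j) (β j), (f j u).re ≤ K j)
    {g : (Fin k → ℂ) → ℂ} (hg : memU α β g) :
    memU α β (fun ζ => Complex.exp (∑ j, f j (ζ j)) * g ζ) := by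
  apply memU_mul (B := Real.exp (∑ j, K j)) ?_ ?_ ?_ hg
  · apply Complex.continuous_exp.comp_continuousOn
    apply continuousOn_finset_sum
    intro j _
    exact (hc j).comp (continuous_apply j).continuousOn (fun ζ hζ => hζ j)
  · intro j hj ζ hζ
    apply DifferentiableOn.cexp
    apply DifferentiableOn.fun_sum
    intro i _
    by_cases hij : i = j
    · subst hij
      simp only [Function.update_self]
      exact hd i
    · simp only [Function.update_of_ne hij]
      exact differentiableOn_const _
  · intro ζ hζ
    rw [Complex.norm_exp, Real.exp_le_exp, Complex.re_sum]
    exact Finset.sum_le_sum (fun j _ => hre j _ (hζ j))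

end memUlemmas

end Stmt15

/-- Proposition 11.2(ii): if `z' ∈ z + S̄*_{α,β}` then
`e_{−z'}·U_{α,β} ⊆ e_{−z}·U_{α,β}`, and `e_{−z'}·U_{α,β}` is dense in `e_{−z}·U_{α,β}` for the
norm `‖f‖ = sup_{ζ ∈ S̄_{α,β}} |e^{z·ζ} f(ζ)|`. -/
theorem statement15
    {k : ℕ}
    (α β : Fin k → ℝ) (hαβ : ∀ j, α j ≤ β j) (hπ : ∀ j, β j < α j + Real.pi)
    (z z' : Fin k → ℂ)
    (hz : ∀ j, z' j - z j ∈ closedSector (-(Real.pi / 2) - α j) (Real.pi / 2 - β j)) :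
    -- inclusion `e_{−z'}·U_{α,β} ⊆ e_{−z}·U_{α,β}`
    (∀ g : (Fin k → ℂ) → ℂ, memU α β g →
      ∃ h : (Fin k → ℂ) → ℂ, memU α β h ∧
        ∀ ζ ∈ multiSector α β,
          Complex.exp (-∑ j, z' j * ζ j) * g ζ = Complex.exp (-∑ j, z j * ζ j) * h ζ) ∧
    -- density of `e_{−z'}·U_{α,β}` in `(e_{−z}·U_{α,β}, sup_{ζ} |e^{z·ζ} · |)`
    (∀ g : (Fin k → ℂ) → ℂ, memU α β g → ∀ ε : ℝ, 0 < ε →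
      ∃ h : (Fin k → ℂ) → ℂ, memU α β h ∧
        ∀ ζ ∈ multiSector α β,
          ‖g ζ - Complex.exp (-∑ j, (z' j - z j) * ζ j) * h ζ‖ ≤ ε) := by
  classical
  constructor
  · -- Part 1: inclusion
    intro g hg
    refine ⟨fun ζ => Complex.exp (∑ j, -((z' j - z j) * ζ j)) * g ζ, ?_, ?_⟩
    · apply Stmt15.memU_exp_mul (f := fun j u => -((z' j - z j) * u)) (K := fun _ => 0)
        ?_ ?_ ?_ hg
      · intro j
        exact ((continuous_const.mul continuous_id).neg).continuousOn
      · intro j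
        exact ((differentiable_id.const_mul _).neg).differentiableOn
      · intro j u hu
        have h1 := Stmt15.re_mul_nonneg (hz j) hu
        simp only [Complex.neg_re]
        linarith
    · intro ζ hζ
      have hsum : ∑ j, (z j * ζ j) + ∑ j, ((z' j - z j) * ζ j) = ∑ j, z' j * ζ j := by
        rw [← Finset.sum_add_distrib]
        exact Finset.sum_congr rfl (fun j _ => by ring)
      have harg : (-∑ j, z' j * ζ j) =
          (-∑ j, z j * ζ j) + ∑ j, -((z' j - z j) * ζ j) := by
        rw [Finset.sum_neg_distrib]
        linear_combination hsum
      rw [harg, Complex.exp_add, mul_assoc]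
  · -- Part 2: density
    intro g hg ε hε
    obtain ⟨M, hM0, hMb⟩ := Stmt15.memU_bounded hg
    obtain ⟨R, hR0, hRt⟩ := Stmt15.memU_tail hg (show (0:ℝ) < ε / 3 by linarith)
    set CR : ℝ := ∑ j, R ^ (Stmt15.pex (α j) (β j)) with hCRdef
    have hCR0 : 0 ≤ CR :=
      Finset.sum_nonneg (fun j _ => Real.rpow_nonneg hR0.le _)
    set t : ℝ := min ((CR + 1)⁻¹) (ε / ((2 * M + 1) * (CR + 1))) with htdef
    have ht0 : 0 < t := lt_min (by positivity) (by positivity)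
    have htCR : t * CR ≤ 1 := by
      have h1 : t ≤ (CR + 1)⁻¹ := min_le_left _ _
      have h2 : t * CR ≤ (CR + 1)⁻¹ * CR := mul_le_mul_of_nonneg_right h1 hCR0
      have h3 : (CR + 1)⁻¹ * CR ≤ 1 := by
        rw [inv_mul_le_iff₀ (by positivity)]
        linarith
      linarith
    have htε : M * (2 * (t * CR)) ≤ ε := by
      have h1 : t ≤ ε / ((2 * M + 1) * (CR + 1)) := min_le_right _ _
      have h2 : t * ((2 * M + 1) * (CR + 1)) ≤ ε :=
        (le_div_iff₀ (by positivity)).mp h1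
      nlinarith [ht0.le]
    refine ⟨fun ζ => Complex.exp (∑ j, ((z' j - z j) * ζ j -
        (t : ℂ) * Stmt15.secPow (α j) (β j) (ζ j))) * g ζ, ?_, ?_⟩
    · -- membership in U
      have hKex : ∀ j : Fin k, ∃ K : ℝ, 0 ≤ K ∧ ∀ r : ℝ, 0 ≤ r →
          ‖z' j - z j‖ * r -
            (t * Real.cos (Stmt15.pex (α j) (β j) * ((β j - α j) / 2))) *
              r ^ (Stmt15.pex (α j) (β j)) ≤ K :=
        fun j => Stmt15.linear_sub_rpow_bound (norm_nonneg _)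
          (mul_pos ht0 (Stmt15.cosP_pos (hαβ j) (hπ j)))
          (Stmt15.one_lt_pex (hαβ j) (hπ j))
      choose K hK0 hKb using hKex
      apply Stmt15.memU_exp_mul
        (f := fun j u => (z' j - z j) * u - (t : ℂ) * Stmt15.secPow (α j) (β j) u)
        (K := K) ?_ ?_ ?_ hg
      · intro j
        exact ((continuous_const.mul continuous_id).continuousOn).sub
          (continuousOn_const.mul (Stmt15.secPow_continuousOn (hαβ j) (hπ j)))
      · intro j
        exact ((differentiable_id.const_mul _).differentiableOn).sub
          ((Stmt15.secPow_differentiableOn (hαβ j) (hπ j)).const_mul _)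
      · intro j u hu
        have h1 : ((z' j - z j) * u).re ≤ ‖z' j - z j‖ * ‖u‖ := by
          calc ((z' j - z j) * u).re ≤ ‖(z' j - z j) * u‖ :=
                Complex.re_le_norm _
            _ = ‖z' j - z j‖ * ‖u‖ := norm_mul _ _
        have h2 := Stmt15.secPow_re_ge (hαβ j) (hπ j) hu
        have h5 : t * (Real.cos (Stmt15.pex (α j) (β j) * ((β j - α j) / 2)) *
            ‖u‖ ^ (Stmt15.pex (α j) (β j))) ≤
            t * (Stmt15.secPow (α j) (β j) u).re :=
          mul_le_mul_of_nonneg_left h2 ht0.le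
        have h3 : ((z' j - z j) * u - (t : ℂ) * Stmt15.secPow (α j) (β j) u).re
            = ((z' j - z j) * u).re - t * (Stmt15.secPow (α j) (β j) u).re := by
          simp [Complex.sub_re, Complex.re_ofReal_mul]
        rw [h3]
        have h4 := hKb j (‖u‖) (norm_nonneg u)
        have h6 : t * (Real.cos (Stmt15.pex (α j) (β j) * ((β j - α j) / 2)) *
            ‖u‖ ^ (Stmt15.pex (α j) (β j))) =
            (t * Real.cos (Stmt15.pex (α j) (β j) * ((β j - α j) / 2))) *
            ‖u‖ ^ (Stmt15.pex (α j) (β j)) := by ring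
        rw [h6] at h5
        linarith
    · -- the approximation estimate
      intro ζ hζ
      set Q : ℂ := ∑ j, Stmt15.secPow (α j) (β j) (ζ j) with hQdef
      have hkey : (-∑ j, (z' j - z j) * ζ j) +
          ∑ j, ((z' j - z j) * ζ j - (t : ℂ) * Stmt15.secPow (α j) (β j) (ζ j)) =
          -((t : ℂ) * Q) := by
        rw [Finset.sum_sub_distrib, ← Finset.mul_sum, hQdef]
        ring
      have heq : g ζ - Complex.exp (-∑ j, (z' j - z j) * ζ j) *
          (Complex.exp (∑ j, ((z' j - z j) * ζ j -
            (t : ℂ) * Stmt15.secPow (α j) (β j) (ζ j))) * g ζ)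
          = (1 - Complex.exp (-((t : ℂ) * Q))) * g ζ := by
        rw [← mul_assoc, ← Complex.exp_add, hkey]
        ring
      rw [heq, norm_mul]
      have hQre : 0 ≤ Q.re := by
        rw [hQdef, Complex.re_sum]
        exact Finset.sum_nonneg
          (fun j _ => Stmt15.secPow_re_nonneg (hαβ j) (hπ j) (hζ j))
      rcases le_total ‖ζ‖ R with hcase | hcase
      · -- compact region
        have hQabs : ‖Q‖ ≤ CR := by
          rw [hQdef, hCRdef]
          calc ‖∑ j, Stmt15.secPow (α j) (β j) (ζ j)‖
              ≤ ∑ j, ‖Stmt15.secPow (α j) (β j) (ζ j)‖ := norm_sum_le _ _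
            _ ≤ ∑ j, R ^ (Stmt15.pex (α j) (β j)) := by
                apply Finset.sum_le_sum
                intro j _
                rw [Stmt15.secPow_abs (hαβ j) (hπ j) (hζ j)]
                apply Real.rpow_le_rpow (norm_nonneg _) ?_
                  (Stmt15.pex_pos (hαβ j)).le
                calc ‖ζ j‖ = ‖ζ j‖ := rfl
                  _ ≤ ‖ζ‖ := norm_le_pi_norm ζ j
                  _ ≤ R := hcase
        have htQ : ‖-((t : ℂ) * Q)‖ ≤ 1 := by
          rw [norm_neg, norm_mul, Complex.norm_real, Real.norm_eq_abs,
            _root_.abs_of_pos ht0]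
          calc t * ‖Q‖ ≤ t * CR := mul_le_mul_of_nonneg_left hQabs ht0.le
            _ ≤ 1 := htCR
        have hexp : ‖1 - Complex.exp (-((t : ℂ) * Q))‖ ≤ 2 * (t * CR) := by
          rw [norm_sub_rev]
          have := Complex.norm_exp_sub_one_le
            (x := -((t : ℂ) * Q)) (by assumption)
          calc ‖Complex.exp (-((t : ℂ) * Q)) - 1‖ ≤ 2 * ‖-((t : ℂ) * Q)‖ := this
            _ = 2 * (t * ‖Q‖) := by
                rw [norm_neg, norm_mul, Complex.norm_real, Real.norm_eq_abs,
                  _root_.abs_of_pos ht0]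
            _ ≤ 2 * (t * CR) := by
                have := mul_le_mul_of_nonneg_left hQabs ht0.le
                linarith
        calc ‖1 - Complex.exp (-((t : ℂ) * Q))‖ * ‖g ζ‖
            ≤ (2 * (t * CR)) * M := by
              apply mul_le_mul hexp (hMb ζ hζ) (norm_nonneg _)
              positivity
          _ = M * (2 * (t * CR)) := by ring
          _ ≤ ε := htε
      · -- tail region
        have hgζ : ‖g ζ‖ ≤ ε / 3 := hRt ζ hζ hcase
        have hexp : ‖1 - Complex.exp (-((t : ℂ) * Q))‖ ≤ 2 := by
          have h1 : ‖Complex.exp (-((t : ℂ) * Q))‖ ≤ 1 := by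
            rw [Complex.norm_exp, Real.exp_le_one_iff,
              Complex.neg_re, Complex.re_ofReal_mul]
            have := mul_nonneg ht0.le hQre
            linarith
          calc ‖1 - Complex.exp (-((t : ℂ) * Q))‖
              ≤ ‖(1 : ℂ)‖ + ‖Complex.exp (-((t : ℂ) * Q))‖ := norm_sub_le _ _
            _ ≤ 1 + 1 := by rw [norm_one]; linarith
            _ = 2 := by norm_num
        calc ‖1 - Complex.exp (-((t : ℂ) * Q))‖ * ‖g ζ‖
            ≤ 2 * (ε / 3) := by
              apply mul_le_mul hexp hgζ (norm_nonneg _)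
              norm_num
          _ ≤ ε := by linarith
end
end
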